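/- arXiv:2205.13863 — 12 statements merged into one kernel-verified Lean document; each statement's English description precedes it below -/
import Mathlib

section
/- Let d ≥ 1, ε > 0, and let A, B ⊆ [0,1]^d be nonempty sets that are 2ε-separated under the ℓ∞ norm. Then the distance-ratio classifier f*(x) = (d∞(x,B) − d∞(x,A))/(d∞(x,A) + d∞(x,B)) is Lipschitz continuous on all of ℝ^d with Lipschitz constant 1/ε with respect to the ℓ∞ norm. -/
/-- The distance-ratio classifier under the ℓ∞ norm (the norm on `Fin d → ℝ`
is the sup norm). -/
noncomputable def distRatioInf (d : ℕ) (A B : Set (Fin d → ℝ)) (x : Fin d → ℝ) : ℝ :=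
  (Metric.infDist x B - Metric.infDist x A) /
    (Metric.infDist x A + Metric.infDist x B)

theorem stmt_0 (d : ℕ) (hd : 1 ≤ d) (ε : ℝ) (hε : 0 < ε)
    (A B : Set (Fin d → ℝ)) (hA : A.Nonempty) (hB : B.Nonempty)
    (hAc : A ⊆ Set.Icc 0 1) (hBc : B ⊆ Set.Icc 0 1)
    (hsep : ∀ a ∈ A, ∀ b ∈ B, 2 * ε ≤ ‖a - b‖) :
    LipschitzWith (Real.toNNReal (1 / ε)) (distRatioInf d A B) := by
  have hAne : Nonempty A := hA.to_subtype
  have hBne : Nonempty B := hB.to_subtype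
  have hsum : ∀ x : Fin d → ℝ, 2 * ε ≤ Metric.infDist x A + Metric.infDist x B := by
    intro x
    have h1 : ∀ b ∈ B, 2 * ε - Metric.infDist x A ≤ dist x b := by
      intro b hb
      have h2 : 2 * ε - dist x b ≤ Metric.infDist x A := by
        rw [Metric.infDist_eq_iInf]
        refine le_ciInf fun a => ?_
        have hs := hsep a a.2 b hb
        rw [← dist_eq_norm] at hs
        have ht : dist (a : Fin d → ℝ) b ≤ dist (a : Fin d → ℝ) x + dist x b :=
          dist_triangle _ _ _
        rw [dist_comm (a : Fin d → ℝ) x] at ht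
        linarith
      linarith
    have h3 : 2 * ε - Metric.infDist x A ≤ Metric.infDist x B := by
      conv_rhs => rw [Metric.infDist_eq_iInf]
      exact le_ciInf fun b => h1 b b.2
    linarith
  apply LipschitzWith.of_dist_le_mul
  intro x y
  set gx := Metric.infDist x A with hgx
  set hx := Metric.infDist x B with hhx
  set gy := Metric.infDist y A with hgy
  set hy := Metric.infDist y B with hhy
  have gx0 : 0 ≤ gx := Metric.infDist_nonneg
  have gy0 : 0 ≤ gy := Metric.infDist_nonneg
  have hx0 : 0 ≤ hx := Metric.infDist_nonneg
  have hy0 : 0 ≤ hy := Metric.infDist_nonneg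
  have Sx : 2 * ε ≤ gx + hx := hsum x
  have Sy : 2 * ε ≤ gy + hy := hsum y
  have Sxpos : 0 < gx + hx := lt_of_lt_of_le (by linarith) Sx
  have Sypos : 0 < gy + hy := lt_of_lt_of_le (by linarith) Sy
  set D := dist x y with hD
  have D0 : 0 ≤ D := dist_nonneg
  have hgl : |gx - gy| ≤ D := by
    have := (Metric.lipschitz_infDist_pt A).dist_le_mul x y
    simpa [Real.dist_eq] using this
  have hhl : |hx - hy| ≤ D := by
    have := (Metric.lipschitz_infDist_pt B).dist_le_mul x y
    simpa [Real.dist_eq] using this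
  have hgl1 : gx - gy ≤ D := (abs_le.1 hgl).2
  have hgl2 : -D ≤ gx - gy := (abs_le.1 hgl).1
  have hhl1 : hx - hy ≤ D := (abs_le.1 hhl).2
  have hhl2 : -D ≤ hx - hy := (abs_le.1 hhl).1
  have key : distRatioInf d A B x - distRatioInf d A B y =
      2 * (hx * gy - gx * hy) / ((gx + hx) * (gy + hy)) := by
    simp only [distRatioInf, ← hgx, ← hhx, ← hgy, ← hhy]
    field_simp
    ring
  have coe : (Real.toNNReal (1 / ε) : ℝ) = 1 / ε :=
    Real.coe_toNNReal _ (by positivity)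
  rw [Real.dist_eq, key, coe]
  have hnum : |2 * (hx * gy - gx * hy)| ≤ 2 * ((gy + hy) * D) := by
    rw [abs_le]
    constructor <;> nlinarith [mul_nonneg gy0 D0, mul_nonneg hy0 D0]
  rw [abs_div, abs_of_pos (mul_pos Sxpos Sypos)]
  rw [div_le_iff₀ (mul_pos Sxpos Sypos)]
  refine hnum.trans ?_
  rw [div_mul_eq_mul_div, div_mul_eq_mul_div, le_div_iff₀ hε]
  nlinarith [mul_nonneg (sub_nonneg.2 Sx) (mul_nonneg D0 Sypos.le)]
end

section
/- Let d ≥ 1, ε > 0, and let A, B ⊆ [0,1]^d be nonempty sets that are 2ε-separated under the ℓ2 (Euclidean) norm. Then the distance-ratio classifier f*(x) = (d₂(x,B) − d₂(x,A))/(d₂(x,A) + d₂(x,B)) is Lipschitz continuous on all of ℝ^d with Lipschitz constant 1/ε with respect to the ℓ2 norm. -/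
/-- The distance-ratio classifier under the ℓ2 (Euclidean) norm. -/
noncomputable def distRatioL2 (d : ℕ) (A B : Set (EuclideanSpace ℝ (Fin d)))
    (x : EuclideanSpace ℝ (Fin d)) : ℝ :=
  (Metric.infDist x B - Metric.infDist x A) /
    (Metric.infDist x A + Metric.infDist x B)

theorem stmt_1 (d : ℕ) (hd : 1 ≤ d) (ε : ℝ) (hε : 0 < ε)
    (A B : Set (EuclideanSpace ℝ (Fin d))) (hA : A.Nonempty) (hB : B.Nonempty)
    (hAc : A ⊆ {x | ∀ i, x i ∈ Set.Icc (0 : ℝ) 1})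
    (hBc : B ⊆ {x | ∀ i, x i ∈ Set.Icc (0 : ℝ) 1})
    (hsep : ∀ a ∈ A, ∀ b ∈ B, 2 * ε ≤ ‖a - b‖) :
    LipschitzWith (Real.toNNReal (1 / ε)) (distRatioL2 d A B) := by
  -- lower bound on the sum of distances
  have le_inf : ∀ (x : EuclideanSpace ℝ (Fin d)) (s : Set (EuclideanSpace ℝ (Fin d)))
      (hs : s.Nonempty) (c : ℝ), (∀ y ∈ s, c ≤ dist x y) → c ≤ Metric.infDist x s := by
    intro x s hs c h
    by_contra hlt
    push_neg at hlt
    obtain ⟨y, hy, hdy⟩ := (Metric.infDist_lt_iff hs).mp hlt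
    exact absurd (h y hy) (not_le.mpr hdy)
  have hsum : ∀ x : EuclideanSpace ℝ (Fin d),
      2 * ε ≤ Metric.infDist x A + Metric.infDist x B := by
    intro x
    have h1 : ∀ a ∈ A, 2 * ε - dist x a ≤ Metric.infDist x B := by
      intro a ha
      apply le_inf x B hB
      intro b hb
      have := hsep a ha b hb
      have hab : ‖a - b‖ = dist a b := (dist_eq_norm a b).symm
      have htri : dist a b ≤ dist a x + dist x b := dist_triangle a x b
      have : dist a x = dist x a := dist_comm a x
      linarith
    have h2 : 2 * ε - Metric.infDist x B ≤ Metric.infDist x A := by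
      apply le_inf x A hA
      intro a ha
      have := h1 a ha
      linarith
    linarith
  have hcoe : ((Real.toNNReal (1 / ε)) : ℝ) = 1 / ε := by
    rw [Real.coe_toNNReal]
    positivity
  apply LipschitzWith.of_dist_le_mul
  intro x y
  rw [hcoe]
  set a := Metric.infDist x A with ha
  set b := Metric.infDist x B with hb
  set a' := Metric.infDist y A with ha'
  set b' := Metric.infDist y B with hb'
  have ha0 : 0 ≤ a := Metric.infDist_nonneg
  have hb0 : 0 ≤ b := Metric.infDist_nonneg
  have ha'0 : 0 ≤ a' := Metric.infDist_nonneg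
  have hb'0 : 0 ≤ b' := Metric.infDist_nonneg
  have hS : 0 < a + b := lt_of_lt_of_le (by linarith) (hsum x)
  have hS' : 0 < a' + b' := lt_of_lt_of_le (by linarith) (hsum y)
  have hDA : |a - a'| ≤ dist x y := by
    have := (Metric.lipschitz_infDist_pt A).dist_le_mul x y
    simpa [Real.dist_eq] using this
  have hDB : |b - b'| ≤ dist x y := by
    have := (Metric.lipschitz_infDist_pt B).dist_le_mul x y
    simpa [Real.dist_eq] using this
  have hDA1 := abs_le.mp hDA
  have hDB1 := abs_le.mp hDB
  have hD0 : 0 ≤ dist x y := dist_nonneg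
  rw [Real.dist_eq]
  unfold distRatioL2
  rw [← ha, ← hb, ← ha', ← hb', div_sub_div _ _ (ne_of_gt hS) (ne_of_gt hS'),
    abs_div, abs_of_pos (mul_pos hS hS'), div_le_iff₀ (mul_pos hS hS')]
  have key : |(b - a) * (a' + b') - (a + b) * (b' - a')| ≤ 2 * (a + b) * dist x y := by
    have hnum : (b - a) * (a' + b') - (a + b) * (b' - a') = 2 * (b * a' - a * b') := by ring
    rw [hnum, abs_le]
    constructor
    · nlinarith [mul_le_mul_of_nonneg_left hDA1.1 hb0, mul_le_mul_of_nonneg_left hDB1.2 ha0]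
    · nlinarith [mul_le_mul_of_nonneg_left hDA1.2 hb0, mul_le_mul_of_nonneg_left hDB1.1 ha0]
  have hfin : 2 * (a + b) * dist x y ≤ 1 / ε * dist x y * ((a + b) * (a' + b')) := by
    rw [div_mul_eq_mul_div, one_mul, div_mul_eq_mul_div, le_div_iff₀ hε]
    nlinarith [mul_nonneg (mul_nonneg (add_nonneg ha0 hb0) hD0)
      (sub_nonneg.mpr (hsum y))]
  exact key.trans hfin
end

section
/- Let d ≥ 1, ε > 0, and let A, B ⊆ [0,1]^d be nonempty sets that are 2ε-separated under the ℓ2 (Euclidean) norm, and let f* be the distance-ratio classifier. Then f*(a) = 1 for every a ∈ A and f*(b) = −1 for every b ∈ B; moreover, for every x ∈ A and every x' ∈ ℝ^d with ‖x' − x‖₂ < ε one has f*(x') > 0, and for every x ∈ B and every x' ∈ ℝ^d with ‖x' − x‖₂ < ε one has f*(x') < 0. In particular f* has zero robust test error at any robust radius strictly smaller than ε. -/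
theorem stmt_3 (d : ℕ) (hd : 1 ≤ d) (ε : ℝ) (hε : 0 < ε)
    (A B : Set (EuclideanSpace ℝ (Fin d))) (hA : A.Nonempty) (hB : B.Nonempty)
    (hAc : A ⊆ {x | ∀ i, x i ∈ Set.Icc (0 : ℝ) 1})
    (hBc : B ⊆ {x | ∀ i, x i ∈ Set.Icc (0 : ℝ) 1})
    (hsep : ∀ a ∈ A, ∀ b ∈ B, 2 * ε ≤ ‖a - b‖) :
    (∀ a ∈ A, distRatioL2 d A B a = 1) ∧
    (∀ b ∈ B, distRatioL2 d A B b = -1) ∧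
    (∀ x ∈ A, ∀ x' : EuclideanSpace ℝ (Fin d), ‖x' - x‖ < ε → 0 < distRatioL2 d A B x') ∧
    (∀ x ∈ B, ∀ x' : EuclideanSpace ℝ (Fin d), ‖x' - x‖ < ε → distRatioL2 d A B x' < 0) := by
  have hAB : ∀ a ∈ A, 2 * ε ≤ Metric.infDist a B := by
    intro a ha
    by_contra h
    push_neg at h
    obtain ⟨b, hb, hlt⟩ := (Metric.infDist_lt_iff hB).mp h
    rw [dist_eq_norm] at hlt
    exact absurd (hsep a ha b hb) (not_le.mpr hlt)
  have hBA : ∀ b ∈ B, 2 * ε ≤ Metric.infDist b A := by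
    intro b hb
    by_contra h
    push_neg at h
    obtain ⟨a, ha, hlt⟩ := (Metric.infDist_lt_iff hA).mp h
    rw [dist_comm, dist_eq_norm] at hlt
    exact absurd (hsep a ha b hb) (not_le.mpr hlt)
  have h2ε : 0 < 2 * ε := by linarith
  refine ⟨?_, ?_, ?_, ?_⟩
  · intro a ha
    have h0 : Metric.infDist a A = 0 := Metric.infDist_zero_of_mem ha
    have hpos : 0 < Metric.infDist a B := lt_of_lt_of_le h2ε (hAB a ha)
    simp [distRatioL2, h0, div_self (ne_of_gt hpos)]
  · intro b hb
    have h0 : Metric.infDist b B = 0 := Metric.infDist_zero_of_mem hb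
    have hpos : 0 < Metric.infDist b A := lt_of_lt_of_le h2ε (hBA b hb)
    rw [distRatioL2, h0]
    field_simp
    ring
  · intro x hx x' hx'
    have hdA : Metric.infDist x' A < ε := by
      have := Metric.infDist_le_dist_of_mem (x := x') hx
      rw [dist_eq_norm] at this
      linarith
    have hdB : ε ≤ Metric.infDist x' B := by
      have h1 : Metric.infDist x B ≤ Metric.infDist x' B + dist x x' :=
        Metric.infDist_le_infDist_add_dist
      have h2 := hAB x hx
      rw [dist_comm, dist_eq_norm] at h1
      linarith
    have hnum : 0 < Metric.infDist x' B - Metric.infDist x' A := by linarith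
    have hden : 0 < Metric.infDist x' A + Metric.infDist x' B := by
      have := Metric.infDist_nonneg (x := x') (s := A)
      linarith
    exact div_pos hnum hden
  · intro x hx x' hx'
    have hdB : Metric.infDist x' B < ε := by
      have := Metric.infDist_le_dist_of_mem (x := x') hx
      rw [dist_eq_norm] at this
      linarith
    have hdA : ε ≤ Metric.infDist x' A := by
      have h1 : Metric.infDist x A ≤ Metric.infDist x' A + dist x x' :=
        Metric.infDist_le_infDist_add_dist
      have h2 := hBA x hx
      rw [dist_comm, dist_eq_norm] at h1
      linarith
    have hnum : Metric.infDist x' B - Metric.infDist x' A < 0 := by linarith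
    have hden : 0 < Metric.infDist x' A + Metric.infDist x' B := by
      have := Metric.infDist_nonneg (x := x') (s := B)
      linarith
    exact div_neg_of_neg_of_pos hnum hden
end

section
/- Let d ≥ 1, ε > 0, c ∈ (0,1), and let A, B ⊆ [0,1]^d be nonempty sets that are 2ε-separated under the ℓ∞ norm, with distance-ratio classifier f*. If a function f : ℝ^d → ℝ satisfies |f(x) − f*(x)| < 1 − c for every x ∈ ℝ^d, then f robustly classifies A and B at radius cε: for every x ∈ A and every x' ∈ ℝ^d with ‖x' − x‖∞ ≤ cε one has f(x') > 0, and for every x ∈ B and every x' ∈ ℝ^d with ‖x' − x‖∞ ≤ cε one has f(x') < 0. -/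
lemma ratio_bound (ε c dA dB : ℝ) (hε : 0 < ε) (hc0 : 0 < c) (hc1 : c < 1)
    (hdA0 : 0 ≤ dA) (hdA : dA ≤ c * ε) (hdB : (2 - c) * ε ≤ dB) :
    1 - c ≤ (dB - dA) / (dA + dB) := by
  rw [le_div_iff₀ (by nlinarith)]
  nlinarith

theorem stmt_4 (d : ℕ) (hd : 1 ≤ d) (ε c : ℝ) (hε : 0 < ε) (hc : c ∈ Set.Ioo (0 : ℝ) 1)
    (A B : Set (Fin d → ℝ)) (hA : A.Nonempty) (hB : B.Nonempty)
    (hAc : A ⊆ Set.Icc 0 1) (hBc : B ⊆ Set.Icc 0 1)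
    (hsep : ∀ a ∈ A, ∀ b ∈ B, 2 * ε ≤ ‖a - b‖)
    (f : (Fin d → ℝ) → ℝ)
    (happrox : ∀ x : Fin d → ℝ, |f x - distRatioInf d A B x| < 1 - c) :
    (∀ x ∈ A, ∀ x' : Fin d → ℝ, ‖x' - x‖ ≤ c * ε → 0 < f x') ∧
    (∀ x ∈ B, ∀ x' : Fin d → ℝ, ‖x' - x‖ ≤ c * ε → f x' < 0) := by
  obtain ⟨hc0, hc1⟩ := hc
  constructor
  · intro x hx x' hx'
    have hdA : Metric.infDist x' A ≤ c * ε := by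
      calc Metric.infDist x' A ≤ dist x' x := Metric.infDist_le_dist_of_mem hx
        _ = ‖x' - x‖ := by rw [dist_eq_norm]
        _ ≤ c * ε := hx'
    have hdB : (2 - c) * ε ≤ Metric.infDist x' B := by
      by_contra hcon
      rw [not_le, Metric.infDist_lt_iff hB] at hcon
      obtain ⟨b, hb, hbd⟩ := hcon
      have h1 := hsep x hx b hb
      have h2 : dist x b ≤ dist x x' + dist x' b := dist_triangle x x' b
      simp only [dist_eq_norm] at h2 hbd
      have : ‖x - x'‖ = ‖x' - x‖ := norm_sub_rev _ _
      nlinarith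
    have hkey := ratio_bound ε c _ _ hε hc0 hc1 (Metric.infDist_nonneg) hdA hdB
    have h := happrox x'
    rw [abs_lt] at h
    unfold distRatioInf at h
    linarith [h.1]
  · intro x hx x' hx'
    have hdB : Metric.infDist x' B ≤ c * ε := by
      calc Metric.infDist x' B ≤ dist x' x := Metric.infDist_le_dist_of_mem hx
        _ = ‖x' - x‖ := by rw [dist_eq_norm]
        _ ≤ c * ε := hx'
    have hdA : (2 - c) * ε ≤ Metric.infDist x' A := by
      by_contra hcon
      rw [not_le, Metric.infDist_lt_iff hA] at hcon
      obtain ⟨a, ha, had⟩ := hcon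
      have h1 := hsep a ha x hx
      have h2 : dist a x ≤ dist a x' + dist x' x := dist_triangle a x' x
      simp only [dist_eq_norm] at h2 had
      have : ‖a - x'‖ = ‖x' - a‖ := norm_sub_rev _ _
      nlinarith
    have hkey := ratio_bound ε c _ _ hε hc0 hc1 (Metric.infDist_nonneg) hdB hdA
    have h := happrox x'
    rw [abs_lt] at h
    unfold distRatioInf at h
    have hpos : 0 < Metric.infDist x' A + Metric.infDist x' B := by
      nlinarith [Metric.infDist_nonneg (x := x') (s := B)]
    have hnum : (Metric.infDist x' B - Metric.infDist x' A) /
        (Metric.infDist x' A + Metric.infDist x' B) ≤ -(1 - c) := by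
      rw [div_le_iff₀ hpos]
      rw [le_div_iff₀ (by linarith)] at hkey
      nlinarith
    linarith [h.2]
end

section
/- Let d ≥ 1, ε > 0, c ∈ (0,1), and let A, B ⊆ [0,1]^d be nonempty sets that are 2ε-separated under the ℓ2 (Euclidean) norm, with distance-ratio classifier f*. If a function f : ℝ^d → ℝ satisfies |f(x) − f*(x)| < 1 − c for every x ∈ ℝ^d, then f robustly classifies A and B at radius cε: for every x ∈ A and every x' ∈ ℝ^d with ‖x' − x‖₂ ≤ cε one has f(x') > 0, and for every x ∈ B and every x' ∈ ℝ^d with ‖x' − x‖₂ ≤ cε one has f(x') < 0. -/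
lemma ratio_bound_s5 (u v c ε : ℝ) (hε : 0 < ε) (hc0 : 0 < c) (hc1 : c < 1)
    (hu0 : 0 ≤ u) (hu : u ≤ c * ε) (hv : (2 - c) * ε ≤ v) :
    1 - c ≤ (v - u) / (u + v) := by
  have hden : 0 < u + v := by nlinarith
  rw [le_div_iff₀ hden]
  nlinarith

theorem stmt_5 (d : ℕ) (hd : 1 ≤ d) (ε c : ℝ) (hε : 0 < ε) (hc : c ∈ Set.Ioo (0 : ℝ) 1)
    (A B : Set (EuclideanSpace ℝ (Fin d))) (hA : A.Nonempty) (hB : B.Nonempty)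
    (hAc : A ⊆ {x | ∀ i, x i ∈ Set.Icc (0 : ℝ) 1})
    (hBc : B ⊆ {x | ∀ i, x i ∈ Set.Icc (0 : ℝ) 1})
    (hsep : ∀ a ∈ A, ∀ b ∈ B, 2 * ε ≤ ‖a - b‖)
    (f : EuclideanSpace ℝ (Fin d) → ℝ)
    (happrox : ∀ x : EuclideanSpace ℝ (Fin d), |f x - distRatioL2 d A B x| < 1 - c) :
    (∀ x ∈ A, ∀ x' : EuclideanSpace ℝ (Fin d), ‖x' - x‖ ≤ c * ε → 0 < f x') ∧
    (∀ x ∈ B, ∀ x' : EuclideanSpace ℝ (Fin d), ‖x' - x‖ ≤ c * ε → f x' < 0) := by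
  obtain ⟨hc0, hc1⟩ := hc
  constructor
  · intro x hx x' hx'
    have hdA : Metric.infDist x' A ≤ c * ε := by
      refine le_trans (Metric.infDist_le_dist_of_mem hx) ?_
      rwa [dist_eq_norm]
    have hdB : (2 - c) * ε ≤ Metric.infDist x' B := by
      by_contra h
      push_neg at h
      obtain ⟨b, hb, hblt⟩ := (Metric.infDist_lt_iff hB).mp h
      have h1 : 2 * ε ≤ dist x b := by
        rw [dist_eq_norm]; exact hsep x hx b hb
      have h2 : dist x b ≤ dist x x' + dist x' b := dist_triangle x x' b
      have h3 : dist x x' ≤ c * ε := by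
        rw [dist_comm, dist_eq_norm]; exact hx'
      linarith
    have hstar : 1 - c ≤ distRatioL2 d A B x' :=
      ratio_bound_s5 _ _ c ε hε hc0 hc1 Metric.infDist_nonneg hdA hdB
    have := happrox x'
    have := abs_lt.mp this
    linarith
  · intro x hx x' hx'
    have hdB : Metric.infDist x' B ≤ c * ε := by
      refine le_trans (Metric.infDist_le_dist_of_mem hx) ?_
      rwa [dist_eq_norm]
    have hdA : (2 - c) * ε ≤ Metric.infDist x' A := by
      by_contra h
      push_neg at h
      obtain ⟨a, ha, halt⟩ := (Metric.infDist_lt_iff hA).mp h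
      have h1 : 2 * ε ≤ dist a x := by
        rw [dist_eq_norm]; exact hsep a ha x hx
      have h2 : dist a x ≤ dist a x' + dist x' x := dist_triangle a x' x
      have h3 : dist x' x ≤ c * ε := by
        rwa [dist_eq_norm]
      rw [dist_comm] at halt
      linarith
    have hstar : 1 - c ≤ (Metric.infDist x' A - Metric.infDist x' B) /
        (Metric.infDist x' B + Metric.infDist x' A) :=
      ratio_bound_s5 _ _ c ε hε hc0 hc1 Metric.infDist_nonneg hdB hdA
    have hneg : distRatioL2 d A B x' ≤ -(1 - c) := by
      unfold distRatioL2
      have : (Metric.infDist x' B - Metric.infDist x' A) /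
          (Metric.infDist x' A + Metric.infDist x' B) =
          -((Metric.infDist x' A - Metric.infDist x' B) /
          (Metric.infDist x' B + Metric.infDist x' A)) := by ring
      rw [this]
      linarith
    have := abs_lt.mp (happrox x')
    linarith
end

section
/- Let d ≥ 1, ε ∈ (0, 1/2), and K = ⌊1/(2ε)⌋ + 1. Let F be a family of functions from ℝ^d to ℝ with the property that for every pair of disjoint sets A, B ⊆ [0,1]^d that are 2ε-separated under the ℓ∞ norm, there exists f ∈ F with f(a) > 0 for all a ∈ A and f(b) < 0 for all b ∈ B. Then there exists a finite set S ⊆ [0,1]^d with |S| = K^d that is sign-shattered by F. -/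
/-- A family `F` of real-valued functions sign-shatters a finite set `S` if for
every subset `T ⊆ S` there is `f ∈ F` which is positive on `T` and negative on
`S \ T`. -/
def SignShatters {X : Type*} (F : Set (X → ℝ)) (S : Finset X) : Prop :=
  ∀ T ⊆ S, ∃ f ∈ F, (∀ x ∈ T, 0 < f x) ∧ (∀ x ∈ S, x ∉ T → f x < 0)

theorem stmt_6 (d : ℕ) (hd : 1 ≤ d) (ε : ℝ) (hε : ε ∈ Set.Ioo (0 : ℝ) (1/2))
    (K : ℕ) (hK : K = Nat.floor (1 / (2 * ε)) + 1)
    (F : Set ((Fin d → ℝ) → ℝ))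
    (hF : ∀ A B : Set (Fin d → ℝ), Disjoint A B →
      A ⊆ Set.Icc 0 1 → B ⊆ Set.Icc 0 1 →
      (∀ a ∈ A, ∀ b ∈ B, 2 * ε ≤ ‖a - b‖) →
      ∃ f ∈ F, (∀ a ∈ A, 0 < f a) ∧ (∀ b ∈ B, f b < 0)) :
    ∃ S : Finset (Fin d → ℝ), ↑S ⊆ Set.Icc (0 : Fin d → ℝ) 1 ∧
      S.card = K ^ d ∧ SignShatters F S := by
  obtain ⟨hε0, hε2⟩ := hε
  have h2ε : (0:ℝ) < 2 * ε := by linarith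
  set g : (Fin d → Fin K) → (Fin d → ℝ) := fun c i => 2 * ε * (c i : ℝ) with hg
  have hginj : Function.Injective g := by
    intro c₁ c₂ h
    funext i
    have := congrFun h i
    simp only [hg] at this
    have : (c₁ i : ℝ) = c₂ i := mul_left_cancel₀ h2ε.ne' this
    exact Fin.ext (by exact_mod_cast this)
  refine ⟨Finset.image g Finset.univ, ?_, ?_, ?_⟩
  · -- subset of Icc 0 1
    intro x hx
    simp only [Finset.coe_image, Set.mem_image] at hx
    obtain ⟨c, _, rfl⟩ := hx
    constructor
    · intro i
      simp only [hg, Pi.zero_apply]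
      positivity
    · intro i
      simp only [hg, Pi.one_apply]
      have h1 : (c i : ℝ) ≤ (K : ℝ) - 1 := by
        have := c i |>.isLt
        have : (c i : ℝ) ≤ (K : ℝ) - 1 := by
          have hlt : ((c i : ℕ) : ℝ) < K := by exact_mod_cast (c i).isLt
          have : ((c i : ℕ) : ℝ) ≤ (K : ℝ) - 1 := by
            have : (c i : ℕ) ≤ K - 1 := Nat.le_pred_of_lt (c i).isLt
            have hK1 : 1 ≤ K := by omega
            calc ((c i : ℕ) : ℝ) ≤ ((K - 1 : ℕ) : ℝ) := by exact_mod_cast this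
              _ = (K : ℝ) - 1 := by
                push_cast [Nat.cast_sub hK1]; ring
          exact this
        exact this
      have h2 : (K : ℝ) - 1 = (Nat.floor (1 / (2 * ε)) : ℝ) := by
        rw [hK]; push_cast; ring
      have h3 : (Nat.floor (1 / (2 * ε)) : ℝ) ≤ 1 / (2 * ε) :=
        Nat.floor_le (by positivity)
      have : 2 * ε * (c i : ℝ) ≤ 2 * ε * (1 / (2 * ε)) := by
        apply mul_le_mul_of_nonneg_left _ h2ε.le
        linarith [h1, h2 ▸ h3]
      calc 2 * ε * (c i : ℝ) ≤ 2 * ε * (1 / (2 * ε)) := this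
        _ = 1 := by field_simp
  · -- cardinality
    rw [Finset.card_image_of_injective _ hginj, Finset.card_univ]
    simp [Fintype.card_fun]
  · -- sign shatters
    intro T hT
    set S := Finset.image g Finset.univ with hS
    have hsep : ∀ a ∈ (S : Set (Fin d → ℝ)), ∀ b ∈ (S : Set (Fin d → ℝ)),
        a ≠ b → 2 * ε ≤ ‖a - b‖ := by
      intro a ha b hb hab
      simp only [hS, Finset.coe_image, Set.mem_image] at ha hb
      obtain ⟨c₁, _, rfl⟩ := ha
      obtain ⟨c₂, _, rfl⟩ := hb
      have hc : c₁ ≠ c₂ := fun h => hab (by rw [h])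
      obtain ⟨i, hi⟩ := Function.ne_iff.mp hc
      have hi' : (c₁ i : ℝ) ≠ (c₂ i : ℝ) := by
        exact_mod_cast fun h => hi (Fin.ext (by exact_mod_cast h))
      have hdiff : 1 ≤ |(c₁ i : ℝ) - (c₂ i : ℝ)| := by
        have : (c₁ i : ℤ) ≠ (c₂ i : ℤ) := by exact_mod_cast hi'
        have h1 : 1 ≤ |(c₁ i : ℤ) - (c₂ i : ℤ)| := Int.one_le_abs (sub_ne_zero.mpr this)
        have : (1 : ℝ) ≤ |((c₁ i : ℤ) : ℝ) - ((c₂ i : ℤ) : ℝ)| := by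
          rw [← Int.cast_sub, ← Int.cast_abs]
          exact_mod_cast h1
        convert this using 3 <;> simp
      have hcoord : ‖(g c₁ - g c₂) i‖ ≤ ‖g c₁ - g c₂‖ := norm_le_pi_norm _ i
      have : ‖(g c₁ - g c₂) i‖ = 2 * ε * |(c₁ i : ℝ) - (c₂ i : ℝ)| := by
        simp only [hg, Pi.sub_apply, Real.norm_eq_abs]
        rw [← mul_sub, abs_mul, abs_of_pos h2ε]
      rw [this] at hcoord
      calc 2 * ε = 2 * ε * 1 := by ring
        _ ≤ 2 * ε * |(c₁ i : ℝ) - (c₂ i : ℝ)| :=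
          mul_le_mul_of_nonneg_left hdiff h2ε.le
        _ ≤ ‖g c₁ - g c₂‖ := hcoord
    have hSIcc : (S : Set (Fin d → ℝ)) ⊆ Set.Icc 0 1 := by
      intro x hx
      simp only [hS, Finset.coe_image, Set.mem_image] at hx
      obtain ⟨c, _, rfl⟩ := hx
      constructor
      · intro i; simp only [hg, Pi.zero_apply]; positivity
      · intro i
        simp only [hg, Pi.one_apply]
        have h2 : (K : ℝ) - 1 = (Nat.floor (1 / (2 * ε)) : ℝ) := by
          rw [hK]; push_cast; ring
        have h3 : (Nat.floor (1 / (2 * ε)) : ℝ) ≤ 1 / (2 * ε) :=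
          Nat.floor_le (by positivity)
        have h1 : (c i : ℝ) ≤ (K : ℝ) - 1 := by
          have hK1 : 1 ≤ K := by omega
          have : (c i : ℕ) ≤ K - 1 := Nat.le_pred_of_lt (c i).isLt
          calc ((c i : ℕ) : ℝ) ≤ ((K - 1 : ℕ) : ℝ) := by exact_mod_cast this
            _ = (K : ℝ) - 1 := by push_cast [Nat.cast_sub hK1]; ring
        calc 2 * ε * (c i : ℝ) ≤ 2 * ε * (1 / (2 * ε)) := by
              apply mul_le_mul_of_nonneg_left _ h2ε.le
              linarith [h1, h2 ▸ h3]
          _ = 1 := by field_simp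
    obtain ⟨f, hfF, hpos, hneg⟩ := hF (↑T) ((S : Set _) \ ↑T)
      (Set.disjoint_sdiff_right.mono_left le_rfl)
      ((Set.Subset.trans (by exact_mod_cast hT) hSIcc))
      (Set.diff_subset.trans hSIcc)
      (by
        intro a ha b hb
        exact hsep a (hT ha) b hb.1 (fun h => hb.2 (h ▸ ha)))
    exact ⟨f, hfF, fun x hx => hpos x hx, fun x hxS hxT => hneg x ⟨hxS, hxT⟩⟩
end

section
/- Let d ≥ 2, ε ∈ (0, 1/2), K = ⌊1/(2ε)⌋, and c ∈ (0,1); assume K^{d−1} is even. For each labeling φ : {1,…,K}^{d−1} → {−1,1} and each index tuple i = (i₁,…,i_{d−1}), define x_φ(i) ∈ ℝ^d with coordinates (i₁/K, …, i_{d−1}/K, 1/2 + cε·φ(i)). Let F be a family of functions from ℝ^d to ℝ such that for every labeling φ there exists f ∈ F that cε-robustly classifies at least (9/10)·K^{d−1} of the labeled points: the number of index tuples i such that every x' ∈ ℝ^d with ‖x' − x_φ(i)‖∞ ≤ cε satisfies f(x') > 0 if φ(i) = 1 and f(x') < 0 if φ(i) = −1 is at least (9/10)·K^{d−1}. Then there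 exists a finite set S ⊆ ℝ^d with |S| ≥ K^{d−1}/20 that is sign-shattered by F. -/
/-- The point `x_φ(i) = (i₁/K, …, i_{d−1}/K, 1/2 + ε₀·φ(i))` of the lower-bound
construction, where the index tuple `i : Fin (d-1) → Fin K` encodes the tuple
`(i₁,…,i_{d−1}) ∈ {1,…,K}^{d−1}` (so the coordinate value is `((i j : ℕ) + 1)/K`). -/
noncomputable def gridPt (d K : ℕ) (ε₀ : ℝ) (φ : (Fin (d - 1) → Fin K) → ℝ)
    (i : Fin (d - 1) → Fin K) : Fin d → ℝ :=
  fun j => if h : (j : ℕ) < d - 1 then (((i ⟨j, h⟩ : ℕ) : ℝ) + 1) / K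
           else 1 / 2 + ε₀ * φ i

open Finset
lemma chernoff (N r : ℕ) (hrN : r ≤ N) (a t : ℝ) (ha : 0 ≤ a) (ht0 : 0 < t) (ht1 : t ≤ 1) :
    ∑ j ∈ Finset.range (r+1), (N.choose j : ℝ) * a^j ≤ (1/t)^r * (1 + a*t)^N := by
  have hstep : ∀ j ∈ Finset.range (r+1),
      (N.choose j : ℝ) * a^j ≤ (1/t)^r * ((N.choose j : ℝ) * (a*t)^j) := by
    intro j hj
    have hjr : j ≤ r := by simpa [Nat.lt_succ_iff] using Finset.mem_range.mp hj
    have htr : t^r ≤ t^j := pow_le_pow_of_le_one ht0.le ht1 hjr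
    have h1 : t^r * ((N.choose j : ℝ) * a^j) ≤ (N.choose j : ℝ) * (a*t)^j := by
      calc t^r * ((N.choose j : ℝ) * a^j) ≤ t^j * ((N.choose j : ℝ) * a^j) := by
            apply mul_le_mul_of_nonneg_right htr
            positivity
        _ = (N.choose j : ℝ) * (a*t)^j := by rw [mul_pow]; ring
    rw [div_pow, one_pow, div_mul_eq_mul_div, le_div_iff₀ (pow_pos ht0 r)]
    linarith [h1]
  calc ∑ j ∈ Finset.range (r+1), (N.choose j : ℝ) * a^j
      ≤ ∑ j ∈ Finset.range (r+1), (1/t)^r * ((N.choose j : ℝ) * (a*t)^j) :=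
        Finset.sum_le_sum hstep
    _ = (1/t)^r * ∑ j ∈ Finset.range (r+1), (N.choose j : ℝ) * (a*t)^j := by
        rw [Finset.mul_sum]
    _ ≤ (1/t)^r * ∑ j ∈ Finset.range (N+1), (N.choose j : ℝ) * (a*t)^j := by
        apply mul_le_mul_of_nonneg_left _ (by positivity)
        apply Finset.sum_le_sum_of_subset_of_nonneg
        · exact Finset.range_subset_range.mpr (by omega)
        · intro j _ _; positivity
    _ = (1/t)^r * (1 + a*t)^N := by
        rw [add_comm (1:ℝ) (a*t), add_pow]
        congr 1
        apply Finset.sum_congr rfl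
        intro j hj
        simp [mul_comm]

lemma arith (N r m : ℕ) (hN : 1 ≤ N) (hr : 10*r ≤ N) (hm : 20*m ≤ N) (hrN : r ≤ N) (hmN : m ≤ N)
    (h : (2:ℕ)^N ≤ (∑ j ∈ Finset.range (r+1), N.choose j * 4^j) *
      (∑ k ∈ Finset.range (m+1), N.choose k)) : False := by
  have h1 := chernoff N r hrN 4 (1/36) (by norm_num) (by norm_num) (by norm_num)
  have h2 := chernoff N m hmN 1 (1/19) (by norm_num) (by norm_num) (by norm_num)
  norm_num at h1 h2
  have hR : (2:ℝ)^N ≤ (∑ j ∈ Finset.range (r+1), (N.choose j:ℝ) * 4^j) *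
      (∑ k ∈ Finset.range (m+1), (N.choose k:ℝ)) := by exact_mod_cast h
  have hSB0 : (0:ℝ) ≤ ∑ k ∈ Finset.range (m+1), (N.choose k:ℝ) := by positivity
  have hmain : (2:ℝ)^N ≤ (36:ℝ)^r * (10/9)^N * ((19:ℝ)^m * (20/19)^N) := by
    calc (2:ℝ)^N ≤ _ := hR
      _ ≤ (36:ℝ)^r * (10/9)^N * ((19:ℝ)^m * (20/19)^N) := by
          apply mul_le_mul h1 h2 hSB0 (by positivity)
  have h20 : ((2:ℝ)^N)^20 ≤ ((36:ℝ)^r * (10/9)^N * ((19:ℝ)^m * (20/19)^N))^20 :=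
    pow_le_pow_left₀ (by positivity) hmain 20
  have hfinal : ((2:ℝ)^N)^20 ≤ ((36:ℝ)^2 * (10/9)^20 * (19 * (20/19)^20))^N := by
    calc ((2:ℝ)^N)^20 ≤ ((36:ℝ)^r * (10/9)^N * ((19:ℝ)^m * (20/19)^N))^20 := h20
      _ = (36:ℝ)^(r*20) * ((10:ℝ)/9)^(N*20) * ((19:ℝ)^(m*20) * ((20:ℝ)/19)^(N*20)) := by
          rw [mul_pow, mul_pow, mul_pow, ← pow_mul, ← pow_mul, ← pow_mul, ← pow_mul]
      _ ≤ (36:ℝ)^(N*2) * ((10:ℝ)/9)^(N*20) * ((19:ℝ)^(N*1) * ((20:ℝ)/19)^(N*20)) := by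
          have e1 : (36:ℝ)^(r*20) ≤ (36:ℝ)^(N*2) :=
            pow_le_pow_right₀ (by norm_num) (by omega)
          have e2 : (19:ℝ)^(m*20) ≤ (19:ℝ)^(N*1) :=
            pow_le_pow_right₀ (by norm_num) (by omega)
          apply mul_le_mul (mul_le_mul_of_nonneg_right e1 (by positivity))
            (mul_le_mul_of_nonneg_right e2 (by positivity)) (by positivity) (by positivity)
      _ = ((36:ℝ)^2)^N * (((10:ℝ)/9)^20)^N * (((19:ℝ)^1)^N * (((20:ℝ)/19)^20)^N) := by
          rw [pow_mul' (36:ℝ), pow_mul' ((10:ℝ)/9), pow_mul' (19:ℝ), pow_mul' ((20:ℝ)/19)]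
      _ = ((36:ℝ)^2 * (10/9)^20 * (19 * (20/19)^20))^N := by
          rw [mul_pow, mul_pow, mul_pow, pow_one]
  have hbase : ((36:ℝ)^2 * (10/9)^20 * (19 * (20/19)^20)) < (2:ℝ)^20 := by norm_num
  have hlt : (((36:ℝ)^2 * (10/9)^20 * (19 * (20/19)^20)))^N < ((2:ℝ)^20)^N :=
    pow_lt_pow_left₀ hbase (by positivity) (by omega)
  have heq : ((2:ℝ)^20)^N = ((2:ℝ)^N)^20 := pow_right_comm 2 20 N
  rw [heq] at hlt
  exact absurd hfinal (not_le.mpr hlt)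


lemma core {ι : Type*} [Fintype ι] [DecidableEq ι] (r m : ℕ)
    (A Z Kc : Finset ι → Finset ι)
    (hZK : ∀ τ, Z τ ⊆ Kc τ) (hKr : ∀ τ, (Kc τ).card ≤ r)
    (hdisj : ∀ τ, ∀ i ∈ A τ, i ∉ Z τ)
    (hrec : ∀ τ, ∀ i, i ∉ Kc τ → (i ∈ τ ↔ i ∈ A τ))
    (hsh : ∀ S : Finset ι, (∀ t ⊆ S, ∃ τ, S ∩ A τ = t ∧ S ∩ Z τ = ∅) → S.card ≤ m) :
    2 ^ (Fintype.card ι) ≤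
      (∑ j ∈ Finset.range (r+1), (Fintype.card ι).choose j * 4^j) *
      (∑ k ∈ Finset.range (m+1), (Fintype.card ι).choose k) := by
  classical
  set N := Fintype.card ι with hN
  set B : ℕ := ∑ k ∈ Finset.range (m+1), N.choose k with hB
  -- the pattern families
  set 𝒜 : Finset ι → Finset (Finset ι) :=
    fun Zf => ((Finset.univ : Finset (Finset ι)).filter (fun τ => Z τ = Zf)).image A with h𝒜
  -- each family has small cardinality, via Sauer-Shelah
  have hAcard : ∀ Zf : Finset ι, (𝒜 Zf).card ≤ B := by
    intro Zf
    have hsub : (𝒜 Zf).shatterer ⊆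
        (Finset.range (m+1)).biUnion (fun k => Finset.univ.powersetCard k) := by
      intro s hs
      rw [Finset.mem_shatterer] at hs
      have hscard : s.card ≤ m := by
        apply hsh
        intro t ht
        obtain ⟨u0, hu0, hsu0⟩ := hs (Finset.Subset.refl s)
        obtain ⟨τ0, hτ0, rfl⟩ := Finset.mem_image.mp hu0
        have hτ0Z : Z τ0 = Zf := (Finset.mem_filter.mp hτ0).2
        have hsA0 : s ⊆ A τ0 := by
          intro i hi
          have h' : i ∈ s ∩ A τ0 := by rw [hsu0]; exact hi
          exact (Finset.mem_inter.mp h').2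
        have hsZf : ∀ i ∈ s, i ∉ Zf := by
          intro i hi
          rw [← hτ0Z]
          exact hdisj τ0 i (hsA0 hi)
        obtain ⟨u, hu, hsu⟩ := hs ht
        obtain ⟨τ, hτ, rfl⟩ := Finset.mem_image.mp hu
        have hτZ : Z τ = Zf := (Finset.mem_filter.mp hτ).2
        refine ⟨τ, hsu, ?_⟩
        rw [Finset.eq_empty_iff_forall_notMem]
        intro i hi
        rw [Finset.mem_inter] at hi
        exact hsZf i hi.1 (hτZ ▸ hi.2)
      rw [Finset.mem_biUnion]
      exact ⟨s.card, Finset.mem_range.mpr (by omega),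
        by rw [Finset.mem_powersetCard_univ]⟩
    calc (𝒜 Zf).card ≤ (𝒜 Zf).shatterer.card := Finset.card_le_card_shatterer _
      _ ≤ ((Finset.range (m+1)).biUnion (fun k => Finset.univ.powersetCard k)).card :=
          Finset.card_le_card hsub
      _ ≤ ∑ k ∈ Finset.range (m+1), (Finset.univ.powersetCard k : Finset (Finset ι)).card :=
          Finset.card_biUnion_le
      _ = B := by
          rw [hB]
          apply Finset.sum_congr rfl
          intro k _
          rw [Finset.card_powersetCard, Finset.card_univ]
  -- the target finset of quadruples
  set T : Finset (Finset ι × Finset ι × Finset ι × Finset ι) :=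
    ((Finset.univ : Finset (Finset ι)).filter (fun Kf => Kf.card ≤ r)).biUnion
      (fun Kf => Kf.powerset.biUnion (fun σ => Kf.powerset.biUnion
        (fun Zf => (𝒜 Zf).image (fun a => (Kf, σ, Zf, a))))) with hT
  -- injection
  have hinj : (Finset.univ : Finset (Finset ι)).card ≤ T.card := by
    apply Finset.card_le_card_of_injOn (fun τ => (Kc τ, τ ∩ Kc τ, Z τ, A τ))
    · intro τ _
      rw [hT, Finset.mem_coe, Finset.mem_biUnion]
      refine ⟨Kc τ, Finset.mem_filter.mpr ⟨Finset.mem_univ _, hKr τ⟩, ?_⟩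
      rw [Finset.mem_biUnion]
      refine ⟨τ ∩ Kc τ, Finset.mem_powerset.mpr Finset.inter_subset_right, ?_⟩
      rw [Finset.mem_biUnion]
      refine ⟨Z τ, Finset.mem_powerset.mpr (hZK τ), ?_⟩
      rw [Finset.mem_image]
      refine ⟨A τ, ?_, rfl⟩
      rw [h𝒜, Finset.mem_image]
      exact ⟨τ, Finset.mem_filter.mpr ⟨Finset.mem_univ _, rfl⟩, rfl⟩
    · intro τ1 _ τ2 _ heq
      simp only [Prod.mk.injEq] at heq
      obtain ⟨hK12, hI12, _, hA12⟩ := heq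
      ext i
      by_cases hiK : i ∈ Kc τ1
      · constructor
        · intro hi
          have : i ∈ τ2 ∩ Kc τ2 := hI12 ▸ Finset.mem_inter.mpr ⟨hi, hiK⟩
          exact (Finset.mem_inter.mp this).1
        · intro hi
          have hiK2 : i ∈ Kc τ2 := hK12 ▸ hiK
          have : i ∈ τ1 ∩ Kc τ1 := hI12 ▸ Finset.mem_inter.mpr ⟨hi, hiK2⟩
          exact (Finset.mem_inter.mp this).1
      · rw [hrec τ1 i hiK, hA12, ← hrec τ2 i (by rw [← hK12]; exact hiK)]
  -- counting T
  have hTcard : T.card ≤ (∑ j ∈ Finset.range (r+1), N.choose j * 4^j) * B := by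
    calc T.card ≤ ∑ Kf ∈ (Finset.univ : Finset (Finset ι)).filter (fun Kf => Kf.card ≤ r),
          (Kf.powerset.biUnion (fun σ => Kf.powerset.biUnion
            (fun Zf => (𝒜 Zf).image (fun a => (Kf, σ, Zf, a))))).card := by
          rw [hT]; exact Finset.card_biUnion_le
      _ ≤ ∑ Kf ∈ (Finset.univ : Finset (Finset ι)).filter (fun Kf => Kf.card ≤ r),
          4^Kf.card * B := by
          apply Finset.sum_le_sum
          intro Kf _
          calc (Kf.powerset.biUnion (fun σ => Kf.powerset.biUnion
                (fun Zf => (𝒜 Zf).image (fun a => (Kf, σ, Zf, a))))).card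
              ≤ ∑ σ ∈ Kf.powerset, (Kf.powerset.biUnion
                (fun Zf => (𝒜 Zf).image (fun a => (Kf, σ, Zf, a)))).card :=
                Finset.card_biUnion_le
            _ ≤ ∑ σ ∈ Kf.powerset, ∑ Zf ∈ Kf.powerset,
                ((𝒜 Zf).image (fun a => (Kf, σ, Zf, a))).card := by
                apply Finset.sum_le_sum
                intro σ _
                exact Finset.card_biUnion_le
            _ ≤ ∑ σ ∈ Kf.powerset, ∑ Zf ∈ Kf.powerset, B := by
                apply Finset.sum_le_sum
                intro σ _
                apply Finset.sum_le_sum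
                intro Zf _
                exact le_trans (Finset.card_image_le) (hAcard Zf)
            _ = 2^Kf.card * (2^Kf.card * B) := by
                rw [Finset.sum_const, Finset.sum_const, Finset.card_powerset, smul_eq_mul,
                  smul_eq_mul]
            _ = 4^Kf.card * B := by ring_nf; rw [show (4:ℕ) = 2*2 from rfl, mul_pow]; ring
      _ = ∑ j ∈ Finset.range (r+1), ∑ Kf ∈ (Finset.univ.powersetCard j : Finset (Finset ι)),
            4^Kf.card * B := by
          rw [← Finset.sum_biUnion]
          · congr 1
            ext Kf
            simp only [Finset.mem_filter, Finset.mem_univ, true_and, Finset.mem_biUnion,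
              Finset.mem_range, Finset.mem_powersetCard_univ]
            constructor
            · intro h; exact ⟨Kf.card, by omega, rfl⟩
            · rintro ⟨j, hj, rfl⟩; omega
          · intro x _ y _ hxy
            simp only [Function.onFun]
            apply Finset.disjoint_left.mpr
            intro s hs1 hs2
            rw [Finset.mem_powersetCard_univ] at hs1 hs2
            exact hxy (by omega)
      _ = (∑ j ∈ Finset.range (r+1), N.choose j * 4^j) * B := by
          rw [Finset.sum_mul]
          apply Finset.sum_congr rfl
          intro j _
          have : ∀ Kf ∈ (Finset.univ.powersetCard j : Finset (Finset ι)),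
              4^Kf.card * B = 4^j * B := by
            intro Kf hKf
            rw [Finset.mem_powersetCard_univ.mp hKf]
          rw [Finset.sum_congr rfl this, Finset.sum_const, Finset.card_powersetCard,
            Finset.card_univ, smul_eq_mul]
          ring
  calc 2^N = (Finset.univ : Finset (Finset ι)).card := by
        rw [Finset.card_univ, Fintype.card_finset]
    _ ≤ T.card := hinj
    _ ≤ _ := hTcard

theorem stmt_10 (d K : ℕ) (hd : 2 ≤ d) (ε c : ℝ) (hε : ε ∈ Set.Ioo (0 : ℝ) (1/2))
    (hK : K = Nat.floor (1 / (2 * ε))) (hc : c ∈ Set.Ioo (0 : ℝ) 1)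
    (heven : Even (K ^ (d - 1)))
    (F : Set ((Fin d → ℝ) → ℝ))
    (hF : ∀ φ : (Fin (d - 1) → Fin K) → ℝ, (∀ i, φ i = 1 ∨ φ i = -1) →
      ∃ f ∈ F, (9 : ℝ) / 10 * K ^ (d - 1) ≤
        ({i : Fin (d - 1) → Fin K |
          ∀ x' : Fin d → ℝ, ‖x' - gridPt d K (c * ε) φ i‖ ≤ c * ε →
            ((φ i = 1 → 0 < f x') ∧ (φ i = -1 → f x' < 0))}.ncard : ℝ)) :
    ∃ S : Finset (Fin d → ℝ), (K : ℝ) ^ (d - 1) / 20 ≤ (S.card : ℝ) ∧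
      SignShatters F S := by
  classical
  obtain ⟨hε0, hεh⟩ := hε
  obtain ⟨hc0, hc1⟩ := hc
  have hcε : 0 ≤ c * ε := le_of_lt (mul_pos hc0 hε0)
  -- K ≥ 1
  have hK1 : 1 ≤ K := by
    rw [hK]
    apply Nat.le_floor
    have h2ε : 0 < 2 * ε := by linarith
    rw [Nat.cast_one, le_div_iff₀ h2ε]
    linarith
  set N := K ^ (d - 1) with hNdef
  have hN1 : 1 ≤ N := Nat.one_le_pow _ _ (by omega)
  have hcastN : ((N : ℕ) : ℝ) = (K : ℝ) ^ (d - 1) := by rw [hNdef]; push_cast; ring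
  have hNcard : Fintype.card (Fin (d - 1) → Fin K) = N := by
    rw [Fintype.card_fun, Fintype.card_fin, Fintype.card_fin]
  -- the center points
  set ctr : (Fin (d - 1) → Fin K) → (Fin d → ℝ) :=
    fun i j => if h : (j : ℕ) < d - 1 then (((i ⟨j, h⟩ : ℕ) : ℝ) + 1) / K else 1/2 with hctr
  have hctr_inj : Function.Injective ctr := by
    intro i1 i2 h12
    funext j0
    have hj : (j0 : ℕ) < d - 1 := j0.isLt
    have hjd : (j0 : ℕ) < d := lt_of_lt_of_le hj (Nat.sub_le d 1)
    have h := congrFun h12 ⟨(j0 : ℕ), hjd⟩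
    rw [hctr] at h
    dsimp only at h
    rw [dif_pos hj, dif_pos hj] at h
    have hK0 : (K : ℝ) ≠ 0 := by exact_mod_cast (by omega : K ≠ 0)
    field_simp at h
    exact Fin.val_injective (by have h' := add_right_cancel h; exact_mod_cast h')
  -- labelings
  set φf : Finset (Fin (d - 1) → Fin K) → ((Fin (d - 1) → Fin K) → ℝ) :=
    fun τ i => if i ∈ τ then 1 else -1 with hφf
  have hφ : ∀ τ i, φf τ i = 1 ∨ φf τ i = -1 := by
    intro τ i
    rw [hφf]
    dsimp only
    split <;> simp
  choose f hfF hcard using fun τ => hF (φf τ) (hφ τ)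
  -- the robustly-correct sets
  set Cs : Finset (Fin (d - 1) → Fin K) → Set (Fin (d - 1) → Fin K) :=
    fun τ => {i | ∀ x' : Fin d → ℝ, ‖x' - gridPt d K (c * ε) (φf τ) i‖ ≤ c * ε →
      ((φf τ i = 1 → 0 < f τ x') ∧ (φf τ i = -1 → f τ x' < 0))} with hCs
  set Cfin : Finset (Fin (d - 1) → Fin K) → Finset (Fin (d - 1) → Fin K) :=
    fun τ => (Set.toFinite (Cs τ)).toFinset with hCfin
  -- norm bound: center is within c*ε of every grid point
  have hnorm : ∀ τ i, ‖ctr i - gridPt d K (c * ε) (φf τ) i‖ ≤ c * ε := by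
    intro τ i
    rw [pi_norm_le_iff_of_nonneg hcε]
    intro j
    simp only [Pi.sub_apply]
    rw [hctr]
    dsimp only
    unfold gridPt
    by_cases hj : (j : ℕ) < d - 1
    · rw [dif_pos hj, dif_pos hj, sub_self, norm_zero]
      exact hcε
    · rw [dif_neg hj, dif_neg hj]
      have he : (1:ℝ)/2 - (1/2 + c * ε * φf τ i) = -((c*ε) * φf τ i) := by ring
      rw [he, norm_neg, Real.norm_eq_abs, abs_mul, abs_of_nonneg hcε]
      rcases hφ τ i with h | h <;> rw [h] <;> norm_num
  -- strict signs on the correct set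
  have hkey : ∀ τ i, i ∈ Cfin τ →
      ((i ∈ τ → 0 < f τ (ctr i)) ∧ (i ∉ τ → f τ (ctr i) < 0)) := by
    intro τ i hi
    rw [hCfin] at hi
    dsimp only at hi
    rw [Set.Finite.mem_toFinset] at hi
    rw [hCs] at hi
    have h2 := hi (ctr i) (hnorm τ i)
    constructor
    · intro hiτ
      apply h2.1
      rw [hφf]; dsimp only; rw [if_pos hiτ]
    · intro hiτ
      apply h2.2
      rw [hφf]; dsimp only; rw [if_neg hiτ]
  -- combinatorial data
  set A : Finset (Fin (d - 1) → Fin K) → Finset (Fin (d - 1) → Fin K) :=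
    fun τ => Finset.univ.filter (fun i => 0 < f τ (ctr i)) with hA
  set Zf : Finset (Fin (d - 1) → Fin K) → Finset (Fin (d - 1) → Fin K) :=
    fun τ => Finset.univ.filter (fun i => ¬ 0 < f τ (ctr i) ∧ ¬ f τ (ctr i) < 0) with hZf
  set Kc : Finset (Fin (d - 1) → Fin K) → Finset (Fin (d - 1) → Fin K) :=
    fun τ => Finset.univ \ Cfin τ with hKc
  set r := N / 10 with hr
  set m := (N - 1) / 20 with hm
  have hZK : ∀ τ, Zf τ ⊆ Kc τ := by
    intro τ i hiZ
    have hz := (Finset.mem_filter.mp hiZ).2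
    rw [hKc]
    dsimp only
    rw [Finset.mem_sdiff]
    refine ⟨Finset.mem_univ _, fun hiC => ?_⟩
    by_cases hiτ : i ∈ τ
    · exact hz.1 ((hkey τ i hiC).1 hiτ)
    · exact hz.2 ((hkey τ i hiC).2 hiτ)
  have hKr : ∀ τ, (Kc τ).card ≤ r := by
    intro τ
    have hcf_le : (Cfin τ).card ≤ N := by
      calc (Cfin τ).card ≤ Finset.univ.card := Finset.card_le_univ _
        _ = N := by rw [Finset.card_univ, hNcard]
    have hc1 : (9:ℝ)/10 * (N : ℝ) ≤ ((Cfin τ).card : ℝ) := by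
      have h0 := hcard τ
      rw [← hcastN] at h0
      rwa [Set.ncard_eq_toFinset_card (Cs τ) (Set.toFinite (Cs τ))] at h0
    have h9 : 9 * N ≤ 10 * (Cfin τ).card := by
      have : (9 * N : ℝ) ≤ 10 * (Cfin τ).card := by linarith
      exact_mod_cast this
    have hKcc : (Kc τ).card = N - (Cfin τ).card := by
      rw [hKc]
      dsimp only
      rw [Finset.card_sdiff_of_subset (Finset.subset_univ _), Finset.card_univ, hNcard]
    rw [hKcc, hr, Nat.le_div_iff_mul_le (by norm_num : 0 < 10)]
    omega
  have hdisj : ∀ τ, ∀ i ∈ A τ, i ∉ Zf τ := by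
    intro τ i hiA hiZ
    exact (Finset.mem_filter.mp hiZ).2.1 (Finset.mem_filter.mp hiA).2
  have hrec : ∀ τ, ∀ i, i ∉ Kc τ → (i ∈ τ ↔ i ∈ A τ) := by
    intro τ i hiK
    have hiC : i ∈ Cfin τ := by
      by_contra hiC
      exact hiK (by rw [hKc]; exact Finset.mem_sdiff.mpr ⟨Finset.mem_univ _, hiC⟩)
    constructor
    · intro hiτ
      exact Finset.mem_filter.mpr ⟨Finset.mem_univ _, (hkey τ i hiC).1 hiτ⟩
    · intro hiA
      by_contra hiτ
      have hneg := (hkey τ i hiC).2 hiτ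
      have hpos := (Finset.mem_filter.mp hiA).2
      linarith
  -- main contradiction setup
  by_contra hcon
  push_neg at hcon
  have hsh : ∀ S : Finset (Fin (d - 1) → Fin K),
      (∀ t ⊆ S, ∃ τ, S ∩ A τ = t ∧ S ∩ Zf τ = ∅) → S.card ≤ m := by
    intro S hS
    set S' := S.image ctr with hS'
    have hS'card : S'.card = S.card := Finset.card_image_of_injective S hctr_inj
    have hshat : SignShatters F S' := by
      intro T hT
      set t := S.filter (fun i => ctr i ∈ T) with ht
      obtain ⟨τ, hAt, hZe⟩ := hS t (Finset.filter_subset _ _)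
      refine ⟨f τ, hfF τ, ?_, ?_⟩
      · intro x hx
        obtain ⟨i, hiS, rfl⟩ := Finset.mem_image.mp (hT hx)
        have hit : i ∈ t := Finset.mem_filter.mpr ⟨hiS, hx⟩
        have hiA : i ∈ A τ := by
          rw [← hAt] at hit
          exact (Finset.mem_inter.mp hit).2
        exact (Finset.mem_filter.mp hiA).2
      · intro x hxS' hxT
        obtain ⟨i, hiS, rfl⟩ := Finset.mem_image.mp hxS'
        have hit : i ∉ t := fun h => hxT (Finset.mem_filter.mp h).2
        have hiA : i ∉ A τ := fun h => hit (by rw [← hAt]; exact Finset.mem_inter.mpr ⟨hiS, h⟩)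
        have hiZ : i ∉ Zf τ := by
          intro h
          have : i ∈ S ∩ Zf τ := Finset.mem_inter.mpr ⟨hiS, h⟩
          rw [hZe] at this
          exact absurd this (Finset.notMem_empty i)
        have hp : ¬ 0 < f τ (ctr i) :=
          fun hp => hiA (Finset.mem_filter.mpr ⟨Finset.mem_univ _, hp⟩)
        have hz : ¬ (¬ 0 < f τ (ctr i) ∧ ¬ f τ (ctr i) < 0) :=
          fun hz => hiZ (Finset.mem_filter.mpr ⟨Finset.mem_univ _, hz⟩)
        tauto
    have hlt : (S'.card : ℝ) < (K : ℝ) ^ (d - 1) / 20 := by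
      by_contra hge
      exact hcon S' (le_of_not_gt hge) hshat
    rw [hS'card, ← hcastN] at hlt
    have h20 : 20 * S.card < N := by
      have : (20 * S.card : ℝ) < (N : ℝ) := by linarith
      exact_mod_cast this
    rw [hm, Nat.le_div_iff_mul_le (by norm_num : 0 < 20)]
    omega
  have hbig := core r m A Zf Kc hZK hKr hdisj hrec hsh
  rw [hNcard] at hbig
  have hr10 : 10 * r ≤ N := by
    have := Nat.div_mul_le_self N 10
    omega
  have hm20 : 20 * m ≤ N := by
    have := Nat.div_mul_le_self (N - 1) 20
    omega
  exact arith N r m hN1 hr10 hm20 (by omega) (by omega) hbig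
end

section
/- Let S be a finite set with |S| = n, and let V ≤ m ≤ n be natural numbers. Let H be a set of functions from S to {−1, 1} such that for every labeling φ : S → {−1, 1} there exists h ∈ H with |{x ∈ S : h(x) = φ(x)}| ≥ m. Then there exists a subset T ⊆ S with |T| = V such that the number of functions ψ : T → {−1, 1} for which some h ∈ H satisfies h(x) = ψ(x) for all x ∈ T is at least 2^V · C(m, V) / C(n, V), where C(a, b) denotes the binomial coefficient. -/
theorem stmt_11 {α : Type*} [Fintype α] (n m V : ℕ) (hcard : Fintype.card α = n)
    (hVm : V ≤ m) (hmn : m ≤ n)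
    (H : Set (α → ℤ)) (hH : ∀ h ∈ H, ∀ x, h x = 1 ∨ h x = -1)
    (hcover : ∀ φ : α → ℤ, (∀ x, φ x = 1 ∨ φ x = -1) →
      ∃ h ∈ H, m ≤ {x | h x = φ x}.ncard) :
    ∃ T : Finset α, T.card = V ∧
      (2 : ℝ) ^ V * (m.choose V) / (n.choose V) ≤
        ({ψ : (↑T : Set α) → ℤ | (∀ x, ψ x = 1 ∨ ψ x = -1) ∧
          ∃ h ∈ H, ∀ x : (↑T : Set α), h ↑x = ψ x}.ncard : ℝ) := by
  classical
  have hVn : V ≤ n := hVm.trans hmn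
  -- encode ±1 labelings by Boolean functions
  set b2z : Bool → ℤ := fun b => if b then 1 else -1 with hb2zdef
  have hb2z_pm : ∀ b, b2z b = 1 ∨ b2z b = -1 := by intro b; cases b <;> simp [b2z]
  have hb2z_inj : Function.Injective b2z := by
    intro a b hab; cases a <;> cases b <;> simp_all [b2z]
  -- pattern sets
  let P : ∀ T : Finset α, Set ((↑T : Set α) → ℤ) := fun T =>
    {ψ | (∀ x, ψ x = 1 ∨ ψ x = -1) ∧ ∃ h ∈ H, ∀ x : (↑T : Set α), h ↑x = ψ x}
  have hPfin : ∀ T : Finset α, (P T).Finite := by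
    intro T
    apply (Set.finite_range (fun g : (↑T : Set α) → Bool => fun x => b2z (g x))).subset
    intro ψ hψ
    refine ⟨fun x => decide (ψ x = 1), funext fun x => ?_⟩
    rcases hψ.1 x with h | h <;> simp [h, b2z]
  let N : Finset α → ℕ := fun T => (hPfin T).toFinset.card
  let pred : (α → Bool) → Finset α → Prop := fun φ T => ∃ h ∈ H, ∀ x ∈ T, h x = b2z (φ x)
  let pcs : Finset (Finset α) := Finset.powersetCard V Finset.univ
  -- Step A : each labeling contributes at least C(m,V) good subsets
  have stepA : ∀ φ : α → Bool, m.choose V ≤ (pcs.filter (fun T => pred φ T)).card := by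
    intro φ
    obtain ⟨h, hhH, hm⟩ := hcover (fun x => b2z (φ x)) (fun x => hb2z_pm _)
    set A : Finset α := Finset.univ.filter (fun x => h x = b2z (φ x)) with hA
    have hsetA : {x | h x = b2z (φ x)} = (↑A : Set α) := by ext x; simp [hA]
    rw [hsetA, Set.ncard_coe_finset] at hm
    have hsub : Finset.powersetCard V A ⊆ pcs.filter (fun T => pred φ T) := by
      intro T hT
      rw [Finset.mem_powersetCard] at hT
      refine Finset.mem_filter.mpr ⟨Finset.mem_powersetCard.mpr ⟨T.subset_univ, hT.2⟩,
        h, hhH, fun x hx => ?_⟩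
      have := hT.1 hx
      rw [hA, Finset.mem_filter] at this
      exact this.2
    calc m.choose V ≤ A.card.choose V := Nat.choose_le_choose V hm
      _ = (Finset.powersetCard V A).card := (Finset.card_powersetCard V A).symm
      _ ≤ _ := Finset.card_le_card hsub
  -- Step B : each V-subset is compatible with at most N T * 2^(n-V) labelings
  have stepB : ∀ T ∈ pcs,
      (Finset.univ.filter (fun φ : α → Bool => pred φ T)).card ≤ N T * 2 ^ (n - V) := by
    intro T hT
    have hTcard : T.card = V := (Finset.mem_powersetCard.mp hT).2
    have hmap : ∀ φ ∈ Finset.univ.filter (fun φ : α → Bool => pred φ T),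
        ((fun x : (↑T : Set α) => b2z (φ x)), fun x : {x : α // x ∉ T} => φ x.1) ∈
          (hPfin T).toFinset ×ˢ (Finset.univ : Finset ({x : α // x ∉ T} → Bool)) := by
      intro φ hφ
      obtain ⟨h, hhH, hagree⟩ := (Finset.mem_filter.mp hφ).2
      refine Finset.mem_product.mpr ⟨(hPfin T).mem_toFinset.mpr
        ⟨fun x => hb2z_pm _, h, hhH, fun x => hagree x.1 (Finset.mem_coe.mp x.2)⟩,
        Finset.mem_univ _⟩
    have hinj : Set.InjOn
        (fun φ : α → Bool => ((fun x : (↑T : Set α) => b2z (φ x)),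
          fun x : {x : α // x ∉ T} => φ x.1))
        ↑(Finset.univ.filter (fun φ : α → Bool => pred φ T)) := by
      intro φ1 _ φ2 _ heq
      funext x
      by_cases hx : x ∈ T
      · have := congrFun (congrArg Prod.fst heq) ⟨x, Finset.mem_coe.mpr hx⟩
        exact hb2z_inj this
      · exact congrFun (congrArg Prod.snd heq) ⟨x, hx⟩
    have hle := Finset.card_le_card_of_injOn _ hmap hinj
    rw [Finset.card_product, Finset.card_univ, Fintype.card_fun, Fintype.card_subtype] at hle
    have : (Finset.univ.filter (fun x : α => x ∉ T)).card = n - V := by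
      have : Finset.univ.filter (fun x : α => x ∉ T) = Tᶜ := by
        ext x; simp [Finset.mem_compl]
      rw [this, Finset.card_compl, hcard, hTcard]
    rw [this, Fintype.card_bool] at hle
    exact hle
  -- double counting
  have hswap : ∑ φ : α → Bool, (pcs.filter (fun T => pred φ T)).card
      = ∑ T ∈ pcs, (Finset.univ.filter (fun φ : α → Bool => pred φ T)).card := by
    simp only [Finset.card_filter]
    exact Finset.sum_comm
  have hkey : 2 ^ V * m.choose V ≤ ∑ T ∈ pcs, N T := by
    have h1 : 2 ^ n * m.choose V ≤ ∑ φ : α → Bool, (pcs.filter (fun T => pred φ T)).card := by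
      calc 2 ^ n * m.choose V = ∑ _φ : α → Bool, m.choose V := by
            rw [Finset.sum_const, Finset.card_univ, Fintype.card_fun, Fintype.card_bool, hcard,
              smul_eq_mul]
        _ ≤ _ := Finset.sum_le_sum fun φ _ => stepA φ
    have h2 : ∑ φ : α → Bool, (pcs.filter (fun T => pred φ T)).card
        ≤ (∑ T ∈ pcs, N T) * 2 ^ (n - V) := by
      rw [hswap, Finset.sum_mul]
      exact Finset.sum_le_sum stepB
    have h3 : 2 ^ V * m.choose V * 2 ^ (n - V) ≤ (∑ T ∈ pcs, N T) * 2 ^ (n - V) := by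
      refine le_trans (le_of_eq ?_) (h1.trans h2)
      rw [mul_comm (2 ^ V * m.choose V), ← mul_assoc, ← pow_add]
      congr 2
      omega
    exact Nat.le_of_mul_le_mul_right h3 (Nat.pow_pos (by norm_num))
  -- averaging
  have hpcscard : pcs.card = n.choose V := by
    rw [Finset.card_powersetCard, Finset.card_univ, hcard]
  have hne : pcs.Nonempty := by
    rw [← Finset.card_pos, hpcscard]
    exact Nat.choose_pos hVn
  have hchoosepos : (0 : ℝ) < n.choose V := by
    exact_mod_cast Nat.choose_pos hVn
  obtain ⟨T, hTmem, hle⟩ := Finset.exists_le_of_sum_le (s := pcs)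
    (f := fun _ => (2 : ℝ) ^ V * (m.choose V) / (n.choose V))
    (g := fun T => (N T : ℝ)) hne (by
      rw [Finset.sum_const, hpcscard, nsmul_eq_mul,
        mul_div_cancel₀ _ hchoosepos.ne']
      calc ((2 : ℝ) ^ V * (m.choose V)) = ((2 ^ V * m.choose V : ℕ) : ℝ) := by push_cast; ring
        _ ≤ ((∑ T ∈ pcs, N T : ℕ) : ℝ) := by exact_mod_cast hkey
        _ = ∑ T ∈ pcs, (N T : ℝ) := by push_cast; rfl)
  refine ⟨T, (Finset.mem_powersetCard.mp hTmem).2, ?_⟩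
  have : ({ψ : (↑T : Set α) → ℤ | (∀ x, ψ x = 1 ∨ ψ x = -1) ∧
      ∃ h ∈ H, ∀ x : (↑T : Set α), h ↑x = ψ x}.ncard : ℝ) = (N T : ℝ) := by
    norm_cast
    exact Set.ncard_eq_toFinset_card (P T) (hPfin T)
  rw [this]
  exact hle
end

section
/- For all natural numbers V, m, n with V ≤ m ≤ n and V < n, one has C(m, V) · (n − V)^V ≥ C(n, V) · (m − V)^V, where C(a, b) denotes the binomial coefficient. Equivalently, C(m, V)/C(n, V) ≥ ((m − V)/(n − V))^V. -/
theorem stmt_12 (V m n : ℕ) (hVm : V ≤ m) (hmn : m ≤ n) (hVn : V < n) :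
    n.choose V * (m - V) ^ V ≤ m.choose V * (n - V) ^ V := by
  have key : n.descFactorial V * (m - V) ^ V ≤ m.descFactorial V * (n - V) ^ V := by
    have hp : ∀ a : ℕ, a ^ V = ∏ _i ∈ Finset.range V, a := fun a => by simp
    rw [Nat.descFactorial_eq_prod_range, Nat.descFactorial_eq_prod_range, hp, hp,
      ← Finset.prod_mul_distrib, ← Finset.prod_mul_distrib]
    apply Finset.prod_le_prod
    · intro i _; positivity
    · intro i hi
      have hiV : i < V := Finset.mem_range.mp hi
      -- (n - i) * (m - V) ≤ (m - i) * (n - V)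
      have h1 : i ≤ m := le_trans (le_of_lt hiV) hVm
      have h2 : V ≤ n := le_of_lt hVn
      zify [h1, hVm, h2, le_trans h1 hmn]
      nlinarith [Int.ofNat_le.mpr hmn, Int.ofNat_le.mpr (le_of_lt hiV)]
  have h := Nat.descFactorial_eq_factorial_mul_choose
  rw [h, h, mul_assoc, mul_assoc] at key
  exact Nat.le_of_mul_le_mul_left key (Nat.factorial_pos V)
end

section
/- Let S be a finite set with |S| = n, let r ≤ n and l be natural numbers, and let H be a set of functions from S to {−1, 1}. Suppose (i) for every u : S → {−1, 1} there exists h ∈ H with |{x ∈ S : h(x) ≠ u(x)}| ≤ r, and (ii) every subset T ⊆ S that is shattered by H satisfies |T| ≤ l. Then (Σ_{j=0}^{l} C(n, j)) · (Σ_{i=0}^{r} C(n, i)) ≥ 2^n, where C(n, i) denotes the binomial coefficient. -/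
open Finset in
private lemma stmt14_count {α : Type*} [Fintype α] [DecidableEq α] (k : ℕ) :
    ((Finset.univ : Finset (Finset α)).filter (fun T => T.card ≤ k)).card
      = ∑ j ∈ Finset.range (k + 1), (Fintype.card α).choose j := by
  have h : (Finset.univ : Finset (Finset α)).filter (fun T => T.card ≤ k)
      = (Finset.range (k + 1)).biUnion (fun j => Finset.powersetCard j Finset.univ) := by
    ext T
    simp [Nat.lt_succ_iff, Finset.mem_powersetCard, eq_comm]
  rw [h, Finset.card_biUnion]
  · simp [Finset.card_powersetCard]
  · intro i hi j hj hij
    simp only [Finset.disjoint_left, Finset.mem_powersetCard]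
    rintro T ⟨-, h1⟩ ⟨-, h2⟩
    exact hij (h1 ▸ h2)

theorem stmt_14 {α : Type*} [Fintype α] (n r l : ℕ) (hcard : Fintype.card α = n)
    (hr : r ≤ n)
    (H : Set (α → ℤ)) (hH : ∀ h ∈ H, ∀ x, h x = 1 ∨ h x = -1)
    (hcover : ∀ u : α → ℤ, (∀ x, u x = 1 ∨ u x = -1) →
      ∃ h ∈ H, {x | h x ≠ u x}.ncard ≤ r)
    (hvc : ∀ T : Finset α,
      (∀ ψ : α → ℤ, (∀ x, ψ x = 1 ∨ ψ x = -1) → ∃ h ∈ H, ∀ x ∈ T, h x = ψ x) →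
      T.card ≤ l) :
    2 ^ n ≤ (∑ j ∈ Finset.range (l + 1), n.choose j) *
      (∑ i ∈ Finset.range (r + 1), n.choose i) := by
  classical
  subst hcard
  set 𝒜 : Finset (Finset α) :=
    Finset.univ.filter (fun A => ∃ h ∈ H, A = Finset.univ.filter (fun x => h x = 1)) with h𝒜
  -- Step 1: card of 𝒜 is at most the Sauer-Shelah bound
  have hstep1 : 𝒜.card ≤ ∑ j ∈ Finset.range (l + 1), (Fintype.card α).choose j := by
    calc 𝒜.card ≤ 𝒜.shatterer.card := Finset.card_le_card_shatterer 𝒜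
    _ ≤ ((Finset.univ : Finset (Finset α)).filter (fun T => T.card ≤ l)).card := by
        apply Finset.card_le_card
        intro T hT
        rw [Finset.mem_shatterer] at hT
        simp only [Finset.mem_filter, Finset.mem_univ, true_and]
        apply hvc
        intro ψ hψ
        obtain ⟨u, hu, hTu⟩ := hT (Finset.filter_subset (fun x => ψ x = 1) T)
        rw [h𝒜, Finset.mem_filter] at hu
        obtain ⟨-, h, hhH, rfl⟩ := hu
        refine ⟨h, hhH, fun x hx => ?_⟩
        have hmem : x ∈ T ∩ Finset.univ.filter (fun x => h x = 1) ↔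
            x ∈ T.filter (fun x => ψ x = 1) := by rw [hTu]
        simp only [Finset.mem_inter, Finset.mem_filter, Finset.mem_univ, true_and, hx] at hmem
        rcases hH h hhH x with h1 | h1 <;> rcases hψ x with h2 | h2 <;>
          simp_all
    _ = _ := stmt14_count l
  -- Step 2: every subset is within distance r of some element of 𝒜
  have hstep2 : ∀ B : Finset α, ∃ A ∈ 𝒜, (symmDiff A B).card ≤ r := by
    intro B
    obtain ⟨h, hhH, hnc⟩ := hcover (fun x => if x ∈ B then 1 else -1)
      (fun x => by by_cases hx : x ∈ B <;> simp [hx])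
    refine ⟨Finset.univ.filter (fun x => h x = 1), ?_, ?_⟩
    · rw [h𝒜, Finset.mem_filter]
      exact ⟨Finset.mem_univ _, h, hhH, rfl⟩
    · have hset : {x | h x ≠ (if x ∈ B then (1 : ℤ) else -1)}
          = ↑(symmDiff (Finset.univ.filter (fun x => h x = 1)) B) := by
        ext x
        simp only [Set.mem_setOf_eq, Finset.coe_symmDiff, Set.mem_symmDiff,
          Finset.mem_coe, Finset.mem_filter, Finset.mem_univ, true_and]
        rcases hH h hhH x with h1 | h1 <;> by_cases hx : x ∈ B <;> simp [h1, hx]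
      rw [hset, Set.ncard_coe_finset] at hnc
      exact hnc
  -- ball size
  have hball : ∀ A : Finset α,
      (Finset.univ.filter (fun B : Finset α => (symmDiff A B).card ≤ r)).card
        = ∑ i ∈ Finset.range (r + 1), (Fintype.card α).choose i := by
    intro A
    rw [← stmt14_count r]
    apply Finset.card_nbij' (fun B => symmDiff A B) (fun C => symmDiff A C)
    · intro B hB
      simp only [Finset.mem_coe, Finset.mem_filter, Finset.mem_univ, true_and] at hB ⊢
      exact hB
    · intro C hC
      simp only [Finset.mem_coe, Finset.mem_filter, Finset.mem_univ, true_and] at hC ⊢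
      rwa [symmDiff_symmDiff_cancel_left]
    · intro B _; exact symmDiff_symmDiff_cancel_left A B
    · intro C _; exact symmDiff_symmDiff_cancel_left A C
  -- Step 3: counting
  have hcover' : (Finset.univ : Finset (Finset α)) ⊆
      𝒜.biUnion (fun A => Finset.univ.filter (fun B => (symmDiff A B).card ≤ r)) := by
    intro B _
    obtain ⟨A, hA, hAB⟩ := hstep2 B
    exact Finset.mem_biUnion.2 ⟨A, hA, by simp [hAB]⟩
  calc 2 ^ Fintype.card α = (Finset.univ : Finset (Finset α)).card := by
        rw [Finset.card_univ, Fintype.card_finset]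
  _ ≤ (𝒜.biUnion (fun A => Finset.univ.filter (fun B => (symmDiff A B).card ≤ r))).card :=
        Finset.card_le_card hcover'
  _ ≤ ∑ A ∈ 𝒜, (Finset.univ.filter (fun B => (symmDiff A B).card ≤ r)).card :=
        Finset.card_biUnion_le
  _ = 𝒜.card * ∑ i ∈ Finset.range (r + 1), (Fintype.card α).choose i := by
        rw [Finset.sum_congr rfl (fun A _ => hball A), Finset.sum_const, smul_eq_mul]
  _ ≤ _ := Nat.mul_le_mul_right _ hstep1
end

section
/- Let S be a finite set with |S| = n, where n ≥ 2 is even, and let F be a family of real-valued functions on S. Suppose that for every labeling φ : S → {−1, 1} there exists f ∈ F with |{x ∈ S : (φ(x) = 1 and f(x) > 0) or (φ(x) = −1 and f(x) < 0)}| ≥ (9/10)·n. Then there exists a subset T ⊆ S with |T| ≥ n/20 that is sign-shattered by F. -/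
open Finset

/-- Binomial tail bound: `(∑_{j ≤ m} C(n,j)) * x^(n-m) ≤ (1+x)^n`. -/
lemma tail_bound_aux (n m x : ℕ) (hm : m ≤ n) (hx : 1 ≤ x) :
    (∑ j ∈ Finset.range (m + 1), n.choose j) * x ^ (n - m) ≤ (1 + x) ^ n := by
  calc (∑ j ∈ Finset.range (m + 1), n.choose j) * x ^ (n - m)
      = ∑ j ∈ Finset.range (m + 1), n.choose j * x ^ (n - m) := by
        rw [Finset.sum_mul]
    _ ≤ ∑ j ∈ Finset.range (m + 1), n.choose j * x ^ (n - j) := by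
        apply Finset.sum_le_sum
        intro j hj
        have hjm : j ≤ m := Nat.lt_succ_iff.1 (Finset.mem_range.1 hj)
        exact Nat.mul_le_mul_left _ (Nat.pow_le_pow_right hx (Nat.sub_le_sub_left hjm n))
    _ ≤ ∑ j ∈ Finset.range (n + 1), n.choose j * x ^ (n - j) := by
        apply Finset.sum_le_sum_of_subset
        exact Finset.range_subset_range.2 (by omega)
    _ = (1 + x) ^ n := by
        rw [add_pow]
        apply Finset.sum_congr rfl
        intro j hj
        rw [one_pow]
        push_cast
        ring

theorem stmt_15 {α : Type*} [Fintype α] (n : ℕ) (hn : 2 ≤ n) (heven : Even n)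
    (hcard : Fintype.card α = n) (F : Set (α → ℝ))
    (hF : ∀ φ : α → ℤ, (∀ x, φ x = 1 ∨ φ x = -1) →
      ∃ f ∈ F, (9 : ℝ) / 10 * n ≤
        ({x | (φ x = 1 ∧ 0 < f x) ∨ (φ x = -1 ∧ f x < 0)}.ncard : ℝ)) :
    ∃ T : Finset α, (n : ℝ) / 20 ≤ (T.card : ℝ) ∧
      ∀ T' ⊆ T, ∃ f ∈ F, (∀ x ∈ T', 0 < f x) ∧ (∀ x ∈ T, x ∉ T' → f x < 0) := by
  classical
  by_contra hcon
  push_neg at hcon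
  -- basic quantities
  set m := n / 10 with hm_def
  set d := (n + 19) / 20 with hd_def
  have hn1 : 1 ≤ n := by omega
  have hmn : m * 10 ≤ n := Nat.div_mul_le_self n 10
  have hmn' : m ≤ n := by omega
  have hd1 : 1 ≤ d := by
    rw [hd_def, Nat.le_div_iff_mul_le (by norm_num)]
    omega
  have hd20 : n ≤ 20 * d := by
    have h1 := Nat.div_add_mod (n + 19) 20
    have h2 : (n + 19) % 20 < 20 := Nat.mod_lt _ (by norm_num)
    omega
  set e := d - 1 with he_def
  have hde : d = e + 1 := by omega
  have hen20 : 20 * e ≤ n := by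
    have h3 : d * 20 ≤ n + 19 := Nat.div_mul_le_self (n + 19) 20
    omega
  have hen : e ≤ n := by omega
  -- labelings and witnesses
  set φ : (α → Bool) → α → ℤ := fun b x => if b x then 1 else -1 with hφ_def
  have key : ∀ b : α → Bool, ∃ f ∈ F, (9 : ℝ) / 10 * n ≤
      (({x | (φ b x = 1 ∧ 0 < f x) ∨ (φ b x = -1 ∧ f x < 0)}).ncard : ℝ) := by
    intro b
    exact hF (φ b) (fun x => by by_cases h : b x <;> simp [hφ_def, h])
  choose f hfF hfc using key
  set pred : (α → Bool) → α → Prop :=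
    fun b x => (φ b x = 1 ∧ 0 < f b x) ∨ (φ b x = -1 ∧ f b x < 0) with hpred_def
  -- error sets
  set E : (α → Bool) → Finset α := fun b => univ.filter (fun x => ¬ pred b x) with hE_def
  have hEcard : ∀ b, (E b).card ≤ m := by
    intro b
    have hset : {x | pred b x} = ↑(univ.filter (pred b)) := by
      ext x; simp
    have hncard : {x | pred b x}.ncard = (univ.filter (pred b)).card := by
      rw [hset, Set.ncard_coe_finset]
    have hcr : (9 : ℝ) / 10 * n ≤ ((univ.filter (pred b)).card : ℝ) := by
      rw [← hncard]; exact hfc b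
    have h9 : 9 * n ≤ 10 * (univ.filter (pred b)).card := by
      exact_mod_cast (by push_cast; linarith : (9 * n : ℝ) ≤ 10 * (univ.filter (pred b)).card)
    have hsplit : (univ.filter (pred b)).card + (E b).card = n := by
      rw [hE_def]
      rw [Finset.card_filter_add_card_filter_not]
      rw [card_univ, hcard]
    rw [hm_def, Nat.le_div_iff_mul_le (by norm_num)]
    omega
  have hnotE : ∀ b x, x ∉ E b → pred b x := by
    intro b x hx
    by_contra h
    exact hx (mem_filter.2 ⟨mem_univ x, h⟩)
  -- masked positive part and error values
  set M : (α → Bool) → Finset α := fun b => univ.filter (fun x => b x = true ∧ x ∉ E b)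
    with hM_def
  set P : (α → Bool) → Finset α := fun b => univ.filter (fun x => b x = true ∧ x ∈ E b)
    with hP_def
  set V2 := ∑ i ∈ range d, n.choose i with hV2_def
  set 𝒜 : Finset α → Finset (Finset α) :=
    fun B => ((univ : Finset (α → Bool)).filter (fun b => E b = B)).image M with h𝒜_def
  -- every set shattered by 𝒜 B is small
  have hshat : ∀ B : Finset α, ∀ T ∈ (𝒜 B).shatterer, T.card < d := by
    intro B T hT
    by_contra hTd
    push_neg at hTd
    rw [mem_shatterer] at hT
    have hTB : ∀ x ∈ T, x ∉ B := by
      intro x hx hxB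
      obtain ⟨u, hu, huT⟩ := hT.exists_inter_eq_singleton hx
      obtain ⟨b, hb, rfl⟩ := mem_image.1 hu
      have hEB : E b = B := (mem_filter.1 hb).2
      have hxu : x ∈ M b := (mem_inter.1 (huT ▸ mem_singleton_self x)).2
      exact (mem_filter.1 hxu).2.2 (hEB ▸ hxB)
    have hreal : (n : ℝ) / 20 ≤ (T.card : ℝ) := by
      have h1 : (n : ℝ) ≤ 20 * d := by exact_mod_cast hd20
      have h2 : (d : ℝ) ≤ T.card := by exact_mod_cast hTd
      linarith
    obtain ⟨T', hT'T, hbad⟩ := hcon T hreal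
    obtain ⟨u, hu, huT⟩ := hT hT'T
    obtain ⟨b, hbmem, rfl⟩ := mem_image.1 hu
    have hEB : E b = B := (mem_filter.1 hbmem).2
    have hpos : ∀ x ∈ T', 0 < f b x := by
      intro x hx
      have hxM : x ∈ M b := (mem_inter.1 (huT ▸ hx)).2
      obtain ⟨hbx, hxE⟩ := (mem_filter.1 hxM).2
      have hp := hnotE b x hxE
      rcases hp with ⟨_, h⟩ | ⟨hneg, _⟩
      · exact h
      · exfalso
        rw [hφ_def] at hneg
        simp [hbx] at hneg
    obtain ⟨x, hxT, hxT', hge⟩ := hbad (f b) (hfF b) hpos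
    have hxE : x ∉ E b := by
      rw [hEB]; exact hTB x hxT
    have hp := hnotE b x hxE
    have hbx : b x = false := by
      by_contra h
      have hbx' : b x = true := by
        cases hb : b x
        · exact absurd hb h
        · rfl
      exact hxT' (huT ▸ mem_inter.2 ⟨hxT, mem_filter.2 ⟨mem_univ _, hbx', hxE⟩⟩)
    rcases hp with ⟨hpos', _⟩ | ⟨_, h⟩
    · rw [hφ_def] at hpos'
      simp [hbx] at hpos'
    · linarith
  -- Sauer-Shelah (Pajor) bound on each 𝒜 B
  have hA : ∀ B, (𝒜 B).card ≤ V2 := by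
    intro B
    calc (𝒜 B).card ≤ (𝒜 B).shatterer.card := card_le_card_shatterer _
      _ ≤ ((range d).biUnion (fun i => (univ : Finset α).powersetCard i)).card := by
          apply card_le_card
          intro T hT
          exact mem_biUnion.2 ⟨T.card, mem_range.2 (hshat B T hT),
            mem_powersetCard.2 ⟨subset_univ _, rfl⟩⟩
      _ ≤ ∑ i ∈ range d, ((univ : Finset α).powersetCard i).card := card_biUnion_le
      _ = V2 := by
          rw [hV2_def]
          apply Finset.sum_congr rfl
          intro i _
          rw [card_powersetCard, card_univ, hcard]
  set 𝓑 : Finset (Finset α) := (univ : Finset (Finset α)).filter (fun B => B.card ≤ m)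
    with h𝓑_def
  set V1 := ∑ j ∈ range (m + 1), n.choose j with hV1_def
  have hB1 : 𝓑.card ≤ V1 := by
    calc 𝓑.card ≤ ((range (m + 1)).biUnion (fun i => (univ : Finset α).powersetCard i)).card := by
          apply card_le_card
          intro B hB
          exact mem_biUnion.2 ⟨B.card, mem_range.2 (Nat.lt_succ_of_le (mem_filter.1 hB).2),
            mem_powersetCard.2 ⟨subset_univ _, rfl⟩⟩
      _ ≤ ∑ j ∈ range (m + 1), ((univ : Finset α).powersetCard j).card := card_biUnion_le
      _ = V1 := by
          rw [hV1_def]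
          apply Finset.sum_congr rfl
          intro j _
          rw [card_powersetCard, card_univ, hcard]
  -- the encoding
  set 𝓣 : Finset (Finset α × Finset α × Finset α) :=
    𝓑.biUnion (fun B => ((𝒜 B) ×ˢ B.powerset).image (fun p => (B, p.1, p.2))) with h𝓣_def
  have hmaps : ∀ b : α → Bool, (E b, M b, P b) ∈ 𝓣 := by
    intro b
    apply mem_biUnion.2
    refine ⟨E b, mem_filter.2 ⟨mem_univ _, hEcard b⟩, ?_⟩
    apply mem_image.2
    refine ⟨(M b, P b), mem_product.2 ⟨?_, ?_⟩, rfl⟩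
    · exact mem_image.2 ⟨b, mem_filter.2 ⟨mem_univ _, rfl⟩, rfl⟩
    · exact mem_powerset.2 (fun x hx => (mem_filter.1 hx).2.2)
  have hinj : Set.InjOn (fun b : α → Bool => (E b, M b, P b))
      ↑(univ : Finset (α → Bool)) := by
    intro b _ b' _ h
    simp only [Prod.mk.injEq] at h
    obtain ⟨h1, h2, h3⟩ := h
    funext x
    by_cases hx : x ∈ E b
    · have hx' : x ∈ E b' := h1 ▸ hx
      have e1 : b x = true ↔ x ∈ P b :=
        ⟨fun h' => mem_filter.2 ⟨mem_univ _, h', hx⟩, fun h' => (mem_filter.1 h').2.1⟩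
      have e2 : b' x = true ↔ x ∈ P b' :=
        ⟨fun h' => mem_filter.2 ⟨mem_univ _, h', hx'⟩, fun h' => (mem_filter.1 h').2.1⟩
      rw [h3] at e1
      have hiff : b x = true ↔ b' x = true := e1.trans e2.symm
      cases hb : b x <;> cases hb' : b' x
      · rfl
      · rw [hb, hb'] at hiff; simp at hiff
      · rw [hb, hb'] at hiff; simp at hiff
      · rfl
    · have hx' : x ∉ E b' := h1 ▸ hx
      have e1 : b x = true ↔ x ∈ M b :=
        ⟨fun h' => mem_filter.2 ⟨mem_univ _, h', hx⟩, fun h' => (mem_filter.1 h').2.1⟩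
      have e2 : b' x = true ↔ x ∈ M b' :=
        ⟨fun h' => mem_filter.2 ⟨mem_univ _, h', hx'⟩, fun h' => (mem_filter.1 h').2.1⟩
      rw [h2] at e1
      have hiff : b x = true ↔ b' x = true := e1.trans e2.symm
      cases hb : b x <;> cases hb' : b' x
      · rfl
      · rw [hb, hb'] at hiff; simp at hiff
      · rw [hb, hb'] at hiff; simp at hiff
      · rfl
  have hcount : 2 ^ n ≤ 𝓣.card := by
    have hcard2 : (univ : Finset (α → Bool)).card = 2 ^ n := by
      rw [card_univ, Fintype.card_fun, Fintype.card_bool, hcard]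
    calc 2 ^ n = (univ : Finset (α → Bool)).card := hcard2.symm
      _ ≤ 𝓣.card := Finset.card_le_card_of_injOn _ (fun b _ => hmaps b) hinj
  have hTcard : 𝓣.card ≤ V1 * (V2 * 2 ^ m) := by
    calc 𝓣.card ≤ ∑ B ∈ 𝓑, (((𝒜 B) ×ˢ B.powerset).image
          (fun p : Finset α × Finset α => (B, p.1, p.2))).card := card_biUnion_le
      _ ≤ ∑ B ∈ 𝓑, V2 * 2 ^ m := by
          apply Finset.sum_le_sum
          intro B hB
          calc (((𝒜 B) ×ˢ B.powerset).image
                (fun p : Finset α × Finset α => (B, p.1, p.2))).card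
              ≤ ((𝒜 B) ×ˢ B.powerset).card := card_image_le
            _ = (𝒜 B).card * 2 ^ B.card := by rw [card_product, card_powerset]
            _ ≤ V2 * 2 ^ m := Nat.mul_le_mul (hA B)
                (Nat.pow_le_pow_right (by norm_num) (mem_filter.1 hB).2)
      _ = 𝓑.card * (V2 * 2 ^ m) := by rw [Finset.sum_const, smul_eq_mul]
      _ ≤ V1 * (V2 * 2 ^ m) := Nat.mul_le_mul_right _ hB1
  -- numeric bounds
  have hV1b : V1 * 9 ^ (n - m) ≤ 10 ^ n := by
    have := tail_bound_aux n m 9 hmn' (by norm_num)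
    norm_num at this ⊢
    exact this
  have hV2b : V2 * 19 ^ (n - e) ≤ 20 ^ n := by
    have h : V2 = ∑ i ∈ range (e + 1), n.choose i := by rw [hV2_def, hde]
    rw [h]
    have := tail_bound_aux n e 19 hen (by norm_num)
    norm_num at this ⊢
    exact this
  -- combine everything
  have main : 2 ^ n * 9 ^ n * 19 ^ n ≤ 200 ^ n * 18 ^ m * 19 ^ e := by
    have step1 : 2 ^ n ≤ V1 * (V2 * 2 ^ m) := le_trans hcount hTcard
    have step2 : 2 ^ n * (9 ^ (n - m) * 19 ^ (n - e)) ≤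
        (V1 * 9 ^ (n - m)) * ((V2 * 19 ^ (n - e)) * 2 ^ m) := by
      calc 2 ^ n * (9 ^ (n - m) * 19 ^ (n - e))
          ≤ (V1 * (V2 * 2 ^ m)) * (9 ^ (n - m) * 19 ^ (n - e)) :=
            Nat.mul_le_mul_right _ step1
        _ = (V1 * 9 ^ (n - m)) * ((V2 * 19 ^ (n - e)) * 2 ^ m) := by ring
    have step3 : 2 ^ n * (9 ^ (n - m) * 19 ^ (n - e)) ≤ 10 ^ n * (20 ^ n * 2 ^ m) :=
      le_trans step2 (Nat.mul_le_mul hV1b (Nat.mul_le_mul_right _ hV2b))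
    have step4 : 2 ^ n * (9 ^ (n - m) * 19 ^ (n - e)) * (9 ^ m * 19 ^ e) ≤
        10 ^ n * (20 ^ n * 2 ^ m) * (9 ^ m * 19 ^ e) := Nat.mul_le_mul_right _ step3
    calc 2 ^ n * 9 ^ n * 19 ^ n
        = 2 ^ n * (9 ^ (n - m) * 19 ^ (n - e)) * (9 ^ m * 19 ^ e) := by
          rw [show 2 ^ n * (9 ^ (n - m) * 19 ^ (n - e)) * (9 ^ m * 19 ^ e) =
            2 ^ n * (9 ^ (n - m) * 9 ^ m) * (19 ^ (n - e) * 19 ^ e) by ring,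
            ← pow_add, ← pow_add, Nat.sub_add_cancel hmn', Nat.sub_add_cancel hen]
      _ ≤ 10 ^ n * (20 ^ n * 2 ^ m) * (9 ^ m * 19 ^ e) := step4
      _ = (10 * 20) ^ n * (2 * 9) ^ m * 19 ^ e := by
          rw [mul_pow, mul_pow]; ring
      _ = 200 ^ n * 18 ^ m * 19 ^ e := by norm_num
  have main342 : 342 ^ n ≤ 200 ^ n * 18 ^ m * 19 ^ e := by
    calc (342 : ℕ) ^ n = 2 ^ n * 9 ^ n * 19 ^ n := by
          rw [← mul_pow, ← mul_pow]
          norm_num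
      _ ≤ 200 ^ n * 18 ^ m * 19 ^ e := main
  -- raise to the 20th power
  have h20 : ((342 : ℕ) ^ 20) ^ n ≤ ((200 ^ 20 * 18 ^ 2 * 19 : ℕ)) ^ n := by
    calc ((342 : ℕ) ^ 20) ^ n = (342 ^ n) ^ 20 := by
          rw [← pow_mul, ← pow_mul, Nat.mul_comm]
      _ ≤ (200 ^ n * 18 ^ m * 19 ^ e) ^ 20 := Nat.pow_le_pow_left main342 20
      _ = 200 ^ (n * 20) * 18 ^ (m * 20) * 19 ^ (e * 20) := by
          rw [mul_pow, mul_pow, ← pow_mul, ← pow_mul, ← pow_mul]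
      _ ≤ 200 ^ (n * 20) * 18 ^ (2 * n) * 19 ^ n := by
          apply Nat.mul_le_mul
          apply Nat.mul_le_mul_left
          · exact Nat.pow_le_pow_right (by norm_num) (by omega)
          · exact Nat.pow_le_pow_right (by norm_num) (by omega)
      _ = ((200 ^ 20 * 18 ^ 2 * 19 : ℕ)) ^ n := by
          rw [mul_pow, mul_pow, ← pow_mul, ← pow_mul, Nat.mul_comm 20 n, Nat.mul_comm 2 n]
  have hlt : ((200 ^ 20 * 18 ^ 2 * 19 : ℕ)) ^ n < ((342 : ℕ) ^ 20) ^ n := by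
    apply Nat.pow_lt_pow_left _ (by omega)
    norm_num
  omega
end

section
/- Let d ≥ 2, ε ∈ (0, 1/2), K = ⌊1/(2ε)⌋, c ∈ (0,1), and μ₀ ∈ (0, 1]; assume K^{d−1} is even. For each labeling φ : {1,…,K}^{d−1} → {−1,1} and index tuple i, define x_φ(i) ∈ ℝ^d with coordinates (i₁/K, …, i_{d−1}/K, 1/2 + cε·φ(i)). Let F be a family of functions from ℝ^d to ℝ such that no finite subset of ℝ^d of cardinality at least K^{d−1}/20 is sign-shattered by F. Then there exists a labeling φ such that, for every weight function w assigning to each index tuple i a weight w(i) ≥ μ₀/K^{d−1} with Σ_i w(i) = 1, and every f ∈ F, the cε-robust error of f is at least μ₀/10; that is, the sum of w(i) over those index tuples i for which there exists x' ∈ ℝ^d with ‖x' − x_φ(i)‖∞ ≤ cε and not (f(x') > 0 if φ(i) = 1, and f(x') < 0 if φ(i) = −1), is at least μ₀/10. -/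
open Finset in
lemma stmt16_tail_bound (N r : ℕ) (h : r ≤ N) (p : ℝ) (hp : 0 < p) (hp2 : p ≤ 1/2) :
    (∑ j ∈ Finset.range (r+1), (N.choose j : ℝ)) ≤ (1/p)^r * (1/(1-p))^(N-r) := by
  have h1p : 0 < 1 - p := by linarith
  have key : (∑ j ∈ range (r+1), (N.choose j : ℝ)) * (p^r * (1-p)^(N-r)) ≤ 1 := by
    rw [Finset.sum_mul]
    have step1 : ∑ j ∈ range (r+1), (N.choose j:ℝ) * (p^r*(1-p)^(N-r))
        ≤ ∑ j ∈ range (r+1), (N.choose j:ℝ) * (p^j*(1-p)^(N-j)) := by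
      refine Finset.sum_le_sum fun j hj => ?_
      have hjr : j ≤ r := by simpa [Nat.lt_succ_iff] using hj
      have e1 : p^r*(1-p)^(N-r) = p^j * (p^(r-j) * (1-p)^(N-r)) := by
        rw [← mul_assoc, ← pow_add]; congr 2; omega
      have e2 : p^j*(1-p)^(N-j) = p^j * ((1-p)^(r-j) * (1-p)^(N-r)) := by
        rw [← pow_add]; congr 2; omega
      rw [e1, e2]
      have hle : p^(r-j) ≤ (1-p)^(r-j) := pow_le_pow_left₀ hp.le (by linarith) _
      have this1 : p^(r-j) * (1-p)^(N-r) ≤ (1-p)^(r-j) * (1-p)^(N-r) := by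
        apply mul_le_mul_of_nonneg_right hle (by positivity)
      have hc : (0:ℝ) ≤ (N.choose j : ℝ) := by positivity
      exact mul_le_mul_of_nonneg_left (mul_le_mul_of_nonneg_left this1 (pow_nonneg hp.le j)) hc
    have step2 : ∑ j ∈ range (r+1), (N.choose j:ℝ) * (p^j*(1-p)^(N-j))
        ≤ ∑ j ∈ range (N+1), (N.choose j:ℝ) * (p^j*(1-p)^(N-j)) := by
      apply Finset.sum_le_sum_of_subset_of_nonneg
      · exact Finset.range_subset_range.2 (by omega)
      · intro j _ _; positivity
    have step3 : ∑ j ∈ range (N+1), (N.choose j:ℝ) * (p^j*(1-p)^(N-j)) = 1 := by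
      calc ∑ j ∈ range (N+1), (N.choose j:ℝ) * (p^j*(1-p)^(N-j))
          = ∑ j ∈ range (N+1), p^j*(1-p)^(N-j)*(N.choose j:ℝ) :=
            Finset.sum_congr rfl fun j _ => by ring
        _ = (p + (1-p))^N := (add_pow p (1-p) N).symm
        _ = 1 := by norm_num
    calc _ ≤ _ := step1
      _ ≤ _ := step2
      _ = 1 := step3
  have hpos : (0:ℝ) < p^r*(1-p)^(N-r) := by positivity
  rw [show ((1:ℝ)/p)^r * (1/(1-p))^(N-r) = 1 / (p^r*(1-p)^(N-r)) by
    rw [div_pow, div_pow, one_pow, one_pow, div_mul_div_comm, one_mul]]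
  rw [le_div_iff₀ hpos]
  exact key

set_option maxHeartbeats 1000000 in
open scoped Classical in
theorem stmt_16 (d K : ℕ) (hd : 2 ≤ d) (ε c μ₀ : ℝ) (hε : ε ∈ Set.Ioo (0 : ℝ) (1/2))
    (hK : K = Nat.floor (1 / (2 * ε))) (hc : c ∈ Set.Ioo (0 : ℝ) 1)
    (hμ : μ₀ ∈ Set.Ioc (0 : ℝ) 1)
    (heven : Even (K ^ (d - 1)))
    (F : Set ((Fin d → ℝ) → ℝ))
    (hF : ∀ S : Finset (Fin d → ℝ), (K : ℝ) ^ (d - 1) / 20 ≤ (S.card : ℝ) →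
      ¬ SignShatters F S) :
    ∃ φ : (Fin (d - 1) → Fin K) → ℝ, (∀ i, φ i = 1 ∨ φ i = -1) ∧
      ∀ w : (Fin (d - 1) → Fin K) → ℝ,
        (∀ i, μ₀ / (K : ℝ) ^ (d - 1) ≤ w i) → (∑ i, w i) = 1 →
        ∀ f ∈ F, μ₀ / 10 ≤
          ∑ i : Fin (d - 1) → Fin K,
            (if ∃ x' : Fin d → ℝ, ‖x' - gridPt d K (c * ε) φ i‖ ≤ c * ε ∧
                ¬((φ i = 1 → 0 < f x') ∧ (φ i = -1 → f x' < 0))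
             then w i else 0) := by
  classical
  obtain ⟨hε0, hε2⟩ := hε
  obtain ⟨hc0, hc1⟩ := hc
  obtain ⟨hμ0, hμ1⟩ := hμ
  have hK1 : 1 ≤ K := by
    rw [hK]
    have h2ε : 0 < 2*ε := by linarith
    have h1 : (1:ℝ) ≤ 1/(2*ε) := by rw [le_div_iff₀ h2ε]; linarith
    exact_mod_cast Nat.le_floor (by exact_mod_cast h1)
  set N := K ^ (d-1) with hN
  have hN1 : 1 ≤ N := Nat.one_le_pow _ _ hK1
  have hKR : ((K:ℝ))^(d-1) = (N:ℝ) := by rw [hN]; push_cast; ring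
  have hNR : (0:ℝ) < (N:ℝ) := by exact_mod_cast hN1
  have hcε : (0:ℝ) ≤ c*ε := by positivity
  -- midpoints
  set mid : (Fin (d-1) → Fin K) → (Fin d → ℝ) := fun i j =>
    if h : (j:ℕ) < d - 1 then (((i ⟨j,h⟩ : ℕ):ℝ)+1)/K else 1/2 with hmid_def
  have hmid_inj : Function.Injective mid := by
    intro i i' h
    funext j0
    have hj : (j0:ℕ) < d := lt_of_lt_of_le j0.isLt (Nat.sub_le d 1)
    have h1 := congrFun h (⟨(j0:ℕ), hj⟩ : Fin d)
    simp only [hmid_def] at h1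
    rw [dif_pos (show (((⟨(j0:ℕ), hj⟩ : Fin d)):ℕ) < d - 1 from j0.isLt),
        dif_pos (show (((⟨(j0:ℕ), hj⟩ : Fin d)):ℕ) < d - 1 from j0.isLt)] at h1
    have hKne : ((K:ℝ)) ≠ 0 := by positivity
    have h2 : ((i ⟨(j0:ℕ), j0.isLt⟩ : ℕ):ℝ) = ((i' ⟨(j0:ℕ), j0.isLt⟩ : ℕ):ℝ) := by
      field_simp at h1
      push_cast at h1; linarith
    have h3 : (i ⟨(j0:ℕ), j0.isLt⟩ : ℕ) = (i' ⟨(j0:ℕ), j0.isLt⟩ : ℕ) := by exact_mod_cast h2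
    have h4 : i ⟨(j0:ℕ), j0.isLt⟩ = i' ⟨(j0:ℕ), j0.isLt⟩ := Fin.val_injective h3
    simpa using h4
  -- labelings
  set lab : ((Fin (d-1) → Fin K) → Bool) → (Fin (d-1) → Fin K) → ℝ :=
    fun σ i => if σ i then 1 else -1 with hlab_def
  have hlab : ∀ σ i, lab σ i = 1 ∨ lab σ i = -1 := fun σ i => by
    by_cases h : σ i <;> simp [hlab_def, h]
  have hmid_norm : ∀ σ i, ‖mid i - gridPt d K (c*ε) (lab σ) i‖ ≤ c*ε := by
    intro σ i
    rw [pi_norm_le_iff_of_nonneg hcε]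
    intro j
    simp only [Pi.sub_apply, hmid_def, gridPt]
    split_ifs with h
    · simpa using hcε
    · have e : (1:ℝ)/2 - (1/2 + c*ε*lab σ i) = -(c*ε*lab σ i) := by ring
      rw [e, norm_neg]
      rcases hlab σ i with h1 | h1 <;> rw [h1]
      · rw [mul_one, Real.norm_eq_abs, abs_of_nonneg hcε]
      · rw [show c*ε*(-1:ℝ) = -(c*ε) by ring, norm_neg, Real.norm_eq_abs,
          abs_of_nonneg hcε]
  by_contra hcon
  -- every labeling has a spoiler with small error set
  have key : ∀ σ : (Fin (d-1) → Fin K) → Bool, ∃ g, g ∈ F ∧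
      10 * ((Finset.univ.filter (fun i => ∃ x' : Fin d → ℝ,
        ‖x' - gridPt d K (c*ε) (lab σ) i‖ ≤ c*ε ∧
        ¬((lab σ i = 1 → 0 < g x') ∧ (lab σ i = -1 → g x' < 0)))).card) < N := by
    intro σ
    have h2 : ¬ ∀ w : (Fin (d-1) → Fin K) → ℝ,
        (∀ i, μ₀ / (K : ℝ) ^ (d - 1) ≤ w i) → (∑ i, w i) = 1 →
        ∀ f ∈ F, μ₀ / 10 ≤
          ∑ i : Fin (d - 1) → Fin K,
            (if ∃ x' : Fin d → ℝ, ‖x' - gridPt d K (c * ε) (lab σ) i‖ ≤ c * ε ∧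
                ¬((lab σ i = 1 → 0 < f x') ∧ (lab σ i = -1 → f x' < 0))
             then w i else 0) := fun hB => hcon ⟨lab σ, hlab σ, hB⟩
    obtain ⟨w, hw⟩ := Classical.not_forall.mp h2
    rw [Classical.not_imp] at hw
    obtain ⟨hw1, hw⟩ := hw
    rw [Classical.not_imp] at hw
    obtain ⟨hw2, hw⟩ := hw
    obtain ⟨g, hg⟩ := Classical.not_forall.mp hw
    rw [Classical.not_imp] at hg
    obtain ⟨hgF, hg⟩ := hg
    have hlt := lt_of_not_ge hg
    refine ⟨g, hgF, ?_⟩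
    set E := Finset.univ.filter (fun i => ∃ x' : Fin d → ℝ,
      ‖x' - gridPt d K (c*ε) (lab σ) i‖ ≤ c*ε ∧
      ¬((lab σ i = 1 → 0 < g x') ∧ (lab σ i = -1 → g x' < 0))) with hE
    have h1 : (E.card : ℝ) * (μ₀ / N) ≤ ∑ i, (if ∃ x' : Fin d → ℝ,
        ‖x' - gridPt d K (c*ε) (lab σ) i‖ ≤ c*ε ∧
        ¬((lab σ i = 1 → 0 < g x') ∧ (lab σ i = -1 → g x' < 0)) then w i else 0) := by
      rw [← Finset.sum_filter, ← hE]
      calc (E.card : ℝ) * (μ₀ / N) = ∑ _i ∈ E, μ₀/N := by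
            rw [Finset.sum_const, nsmul_eq_mul]
        _ ≤ ∑ i ∈ E, w i := Finset.sum_le_sum fun i _ => by
            have := hw1 i; rwa [hKR] at this
    have h2 : (E.card:ℝ)*(μ₀/N) < μ₀/10 := lt_of_le_of_lt h1 hlt
    have h2' : (E.card:ℝ) * μ₀ / (N:ℝ) < μ₀/10 := by rw [mul_div_assoc]; exact h2
    have h3 := (div_lt_div_iff₀ hNR (by norm_num : (0:ℝ) < 10)).mp h2'
    have h4 : ((10 * E.card : ℕ) : ℝ) < (N:ℝ) := by push_cast; nlinarith
    exact_mod_cast h4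
  choose f hfF hEcard using key
  set Eset : ((Fin (d-1) → Fin K) → Bool) → Finset (Fin (d-1) → Fin K) := fun σ =>
    Finset.univ.filter (fun i => ∃ x' : Fin d → ℝ,
      ‖x' - gridPt d K (c*ε) (lab σ) i‖ ≤ c*ε ∧
      ¬((lab σ i = 1 → 0 < f σ x') ∧ (lab σ i = -1 → f σ x' < 0))) with hEset_def
  set Aset : ((Fin (d-1) → Fin K) → Bool) → Finset (Fin (d-1) → Fin K) := fun σ =>
    (Finset.univ.filter (fun i => σ i = true)) \ Eset σ with hAset_def
  set m := (N + 19)/20 with hm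
  set r := (N - 1)/10 with hr
  set 𝒜 : Finset (Fin (d-1) → Fin K) → Finset (Finset (Fin (d-1) → Fin K)) := fun E =>
    (Finset.univ.filter (fun σ => Eset σ = E)).image Aset with h𝒜_def
  have hcardI : Fintype.card (Fin (d-1) → Fin K) = N := by
    rw [Fintype.card_fun]; simp [hN]
  -- Claim 1: shattered sets are small
  have claim1 : ∀ E S, (𝒜 E).Shatters S → S.card < m := by
    intro E S hSh
    by_contra hge
    push_neg at hge
    have hSE : ∀ i ∈ S, i ∉ E := by
      obtain ⟨u, hu, hSu⟩ := hSh (Finset.Subset.refl S)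
      obtain ⟨σ, hσmem, rfl⟩ := Finset.mem_image.mp hu
      have hσE : Eset σ = E := (Finset.mem_filter.mp hσmem).2
      intro i hi
      have hiu : i ∈ Aset σ := (Finset.mem_inter.mp (hSu ▸ hi)).2
      have := (Finset.mem_sdiff.mp hiu).2
      rw [hσE] at this
      exact this
    have hnotbad : ∀ σ i, i ∉ Eset σ → ∀ x' : Fin d → ℝ,
        ‖x' - gridPt d K (c*ε) (lab σ) i‖ ≤ c*ε →
        ((lab σ i = 1 → 0 < f σ x') ∧ (lab σ i = -1 → f σ x' < 0)) := by
      intro σ i hi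
      have : ¬ (∃ x' : Fin d → ℝ, ‖x' - gridPt d K (c*ε) (lab σ) i‖ ≤ c*ε ∧
          ¬((lab σ i = 1 → 0 < f σ x') ∧ (lab σ i = -1 → f σ x' < 0))) := by
        intro hex
        exact hi (Finset.mem_filter.mpr ⟨Finset.mem_univ _, hex⟩)
      push_neg at this
      intro x' hx'
      exact (this x' hx')
    have hsh2 : SignShatters F (S.image mid) := by
      intro T hT
      set U := S.filter (fun i => mid i ∈ T) with hU
      have hUsub : U ⊆ S := by rw [hU]; exact Finset.filter_subset _ _
      obtain ⟨u, hu, hSu⟩ := hSh hUsub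
      obtain ⟨σ, hσmem, rfl⟩ := Finset.mem_image.mp hu
      have hσE : Eset σ = E := (Finset.mem_filter.mp hσmem).2
      refine ⟨f σ, hfF σ, ?_, ?_⟩
      · intro x hx
        obtain ⟨i, hiS, rfl⟩ := Finset.mem_image.mp (hT hx)
        have hiU : i ∈ U := Finset.mem_filter.mpr ⟨hiS, hx⟩
        have hiA : i ∈ Aset σ := (Finset.mem_inter.mp (hSu ▸ hiU)).2
        have hiE : i ∉ Eset σ := (Finset.mem_sdiff.mp hiA).2
        have hσi : σ i = true := (Finset.mem_filter.mp (Finset.mem_sdiff.mp hiA).1).2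
        have h := hnotbad σ i hiE (mid i) (hmid_norm σ i)
        exact h.1 (by simp [hlab_def, hσi])
      · intro x hxS hxT
        obtain ⟨i, hiS, rfl⟩ := Finset.mem_image.mp hxS
        have hiU : i ∉ U := fun h => hxT (Finset.mem_filter.mp h).2
        have hiA : i ∉ Aset σ := fun h => hiU (hSu ▸ Finset.mem_inter.mpr ⟨hiS, h⟩)
        have hiE : i ∉ Eset σ := fun h => hSE i hiS (hσE ▸ h)
        have hσi : σ i = false := by
          rcases Bool.eq_false_or_eq_true (σ i) with h | h
          · exact absurd (Finset.mem_sdiff.mpr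
              ⟨Finset.mem_filter.mpr ⟨Finset.mem_univ i, h⟩, hiE⟩) hiA
          · exact h
        have h := hnotbad σ i hiE (mid i) (hmid_norm σ i)
        exact h.2 (by simp [hlab_def, hσi])
    refine hF (S.image mid) ?_ hsh2
    rw [Finset.card_image_of_injective _ hmid_inj, hKR]
    have h20 : N ≤ 20 * m := by omega
    rw [div_le_iff₀ (by norm_num : (0:ℝ) < 20)]
    have hmS : (m:ℝ) ≤ (S.card:ℝ) := by exact_mod_cast hge
    have : (N:ℝ) ≤ 20*(m:ℝ) := by exact_mod_cast h20
    linarith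
  -- counting
  set B := ∑ k ∈ Finset.range m, N.choose k with hB
  have h𝒜card : ∀ E : Finset (Fin (d-1) → Fin K), (𝒜 E).card ≤ B := by
    intro E
    calc (𝒜 E).card ≤ (𝒜 E).shatterer.card := Finset.card_le_card_shatterer _
      _ ≤ ((Finset.range m).biUnion (fun k =>
            Finset.powersetCard k (Finset.univ : Finset (Fin (d-1) → Fin K)))).card := by
          apply Finset.card_le_card
          intro S hS
          have hSh := Finset.mem_shatterer.mp hS
          have := claim1 E S hSh
          exact Finset.mem_biUnion.mpr ⟨S.card, Finset.mem_range.mpr this,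
            Finset.mem_powersetCard.mpr ⟨Finset.subset_univ _, rfl⟩⟩
      _ ≤ ∑ k ∈ Finset.range m, (Finset.powersetCard k
            (Finset.univ : Finset (Fin (d-1) → Fin K))).card := Finset.card_biUnion_le
      _ = B := by
          rw [hB]
          refine Finset.sum_congr rfl fun k _ => ?_
          rw [Finset.card_powersetCard, Finset.card_univ, hcardI]
  set Es := (Finset.univ : Finset (Finset (Fin (d-1) → Fin K))).filter
      (fun E => 10*E.card < N) with hEs
  have hpart : (Finset.univ : Finset ((Fin (d-1) → Fin K) → Bool)).card
      = ∑ E ∈ Es, (Finset.univ.filter (fun σ => Eset σ = E)).card := by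
    apply Finset.card_eq_sum_card_fiberwise
    intro σ _
    exact Finset.mem_filter.mpr ⟨Finset.mem_univ _, hEcard σ⟩
  have hfiber : ∀ E : Finset (Fin (d-1) → Fin K),
      (Finset.univ.filter (fun σ => Eset σ = E)).card ≤ 2^E.card * (𝒜 E).card := by
    intro E
    have hmaps : ∀ σ ∈ Finset.univ.filter (fun σ => Eset σ = E),
        (E.filter (fun i => σ i = true), Aset σ) ∈ E.powerset ×ˢ 𝒜 E := by
      intro σ hσ
      refine Finset.mem_product.mpr ⟨Finset.mem_powerset.mpr (Finset.filter_subset _ _), ?_⟩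
      exact Finset.mem_image.mpr ⟨σ, hσ, rfl⟩
    have hinj : Set.InjOn (fun σ => (E.filter (fun i => σ i = true), Aset σ))
        (Finset.univ.filter (fun σ => Eset σ = E)) := by
      intro σ hσ σ' hσ' heq
      have hEσ : Eset σ = E := (Finset.mem_filter.mp hσ).2
      have hEσ' : Eset σ' = E := (Finset.mem_filter.mp hσ').2
      have h1 : E.filter (fun i => σ i = true) = E.filter (fun i => σ' i = true) :=
        congrArg Prod.fst heq
      have h2 : Aset σ = Aset σ' := congrArg Prod.snd heq
      funext i
      by_cases hiE : i ∈ E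
      · have hmem := Finset.ext_iff.mp h1 i
        simp only [Finset.mem_filter, hiE, true_and] at hmem
        exact Bool.eq_iff_iff.mpr hmem
      · have hA : i ∈ Aset σ ↔ i ∈ Aset σ' := by rw [h2]
        simp only [hAset_def, Finset.mem_sdiff, Finset.mem_filter, Finset.mem_univ,
          true_and, hEσ, hEσ'] at hA
        have hmem : σ i = true ↔ σ' i = true := by
          constructor
          · intro h; exact (hA.mp ⟨h, hiE⟩).1
          · intro h; exact (hA.mpr ⟨h, hiE⟩).1
        exact Bool.eq_iff_iff.mpr hmem
    calc (Finset.univ.filter (fun σ => Eset σ = E)).card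
        ≤ (E.powerset ×ˢ 𝒜 E).card := Finset.card_le_card_of_injOn _ hmaps hinj
      _ = 2^E.card * (𝒜 E).card := by rw [Finset.card_product, Finset.card_powerset]
  have hEsum : ∑ E ∈ Es, 2^E.card ≤ ∑ k ∈ Finset.range (r+1), N.choose k * 2^k := by
    have hsub : Es ⊆ (Finset.range (r+1)).biUnion (fun k =>
        Finset.powersetCard k (Finset.univ : Finset (Fin (d-1) → Fin K))) := by
      intro E hE
      have h10 : 10*E.card < N := (Finset.mem_filter.mp hE).2
      exact Finset.mem_biUnion.mpr ⟨E.card, Finset.mem_range.mpr (by omega),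
        Finset.mem_powersetCard.mpr ⟨Finset.subset_univ _, rfl⟩⟩
    calc ∑ E ∈ Es, 2^E.card
        ≤ ∑ E ∈ (Finset.range (r+1)).biUnion (fun k =>
            Finset.powersetCard k (Finset.univ : Finset (Fin (d-1) → Fin K))), 2^E.card :=
          Finset.sum_le_sum_of_subset hsub
      _ = ∑ k ∈ Finset.range (r+1), ∑ E ∈ Finset.powersetCard k
            (Finset.univ : Finset (Fin (d-1) → Fin K)), 2^E.card := by
          apply Finset.sum_biUnion
          intro a _ b _ hab
          simp only [Function.onFun]
          rw [Finset.disjoint_left]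
          intro S hSa hSb
          have h1 := (Finset.mem_powersetCard.mp hSa).2
          have h2 := (Finset.mem_powersetCard.mp hSb).2
          exact hab (h1.symm.trans h2)
      _ = ∑ k ∈ Finset.range (r+1), N.choose k * 2^k := by
          refine Finset.sum_congr rfl fun k _ => ?_
          have hcg : ∀ E ∈ Finset.powersetCard k (Finset.univ : Finset (Fin (d-1) → Fin K)),
              2^E.card = 2^k := fun E hE => by rw [(Finset.mem_powersetCard.mp hE).2]
          rw [Finset.sum_congr rfl hcg, Finset.sum_const, Finset.card_powersetCard,
            Finset.card_univ, hcardI, smul_eq_mul]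
  set T2 := ∑ k ∈ Finset.range (r+1), N.choose k * 2^k with hT2
  have hcount : 2^N ≤ B * T2 := by
    have h0 : (Finset.univ : Finset ((Fin (d-1) → Fin K) → Bool)).card = 2^N := by
      rw [Finset.card_univ, Fintype.card_fun, hcardI]; simp
    calc 2^N = ∑ E ∈ Es, (Finset.univ.filter (fun σ => Eset σ = E)).card := by
          rw [← h0, hpart]
      _ ≤ ∑ E ∈ Es, 2^E.card * (𝒜 E).card := Finset.sum_le_sum fun E _ => hfiber E
      _ ≤ ∑ E ∈ Es, 2^E.card * B := Finset.sum_le_sum fun E _ =>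
          Nat.mul_le_mul_left _ (h𝒜card E)
      _ = B * ∑ E ∈ Es, 2^E.card := by
          rw [Finset.mul_sum]
          exact Finset.sum_congr rfl fun E _ => Nat.mul_comm _ _
      _ ≤ B * T2 := Nat.mul_le_mul_left _ hEsum
  -- real side
  have hm1 : 1 ≤ m := by omega
  have hm1N : m - 1 ≤ N := by omega
  have hrN : r ≤ N := by omega
  have hBr : (B:ℝ) ≤ 20^(m-1) * (20/19)^N := by
    have htb := stmt16_tail_bound N (m-1) hm1N (1/20) (by norm_num) (by norm_num)
    have hrange : Finset.range m = Finset.range ((m-1)+1) := by congr 1; omega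
    have hBcast : (B:ℝ) = ∑ j ∈ Finset.range ((m-1)+1), (N.choose j : ℝ) := by
      rw [hB, hrange]; push_cast; ring
    rw [hBcast]
    calc ∑ j ∈ Finset.range ((m-1)+1), (N.choose j : ℝ)
        ≤ (1/(1/20:ℝ))^(m-1) * (1/(1-1/20))^(N-(m-1)) := htb
      _ = 20^(m-1) * (20/19)^(N-(m-1)) := by norm_num
      _ ≤ 20^(m-1) * (20/19)^N := by
          apply mul_le_mul_of_nonneg_left _ (by positivity)
          exact pow_le_pow_right₀ (by norm_num) (by omega)
  have hT2r : (T2:ℝ) ≤ 20^r * (10/9)^N := by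
    have hT2a : T2 ≤ 2^r * ∑ k ∈ Finset.range (r+1), N.choose k := by
      rw [Finset.mul_sum, hT2]
      refine Finset.sum_le_sum fun k hk => ?_
      have hkr : k ≤ r := by simpa [Nat.lt_succ_iff] using hk
      calc N.choose k * 2^k ≤ N.choose k * 2^r :=
            Nat.mul_le_mul_left _ (Nat.pow_le_pow_right (by norm_num) hkr)
        _ = 2^r * N.choose k := Nat.mul_comm _ _
    have htb := stmt16_tail_bound N r hrN (1/10) (by norm_num) (by norm_num)
    have h1 : (T2:ℝ) ≤ 2^r * ∑ k ∈ Finset.range (r+1), (N.choose k:ℝ) := by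
      calc (T2:ℝ) ≤ ((2^r * ∑ k ∈ Finset.range (r+1), N.choose k : ℕ) : ℝ) := by
            exact_mod_cast hT2a
        _ = 2^r * ∑ k ∈ Finset.range (r+1), (N.choose k:ℝ) := by push_cast; ring
    calc (T2:ℝ) ≤ 2^r * ∑ k ∈ Finset.range (r+1), (N.choose k:ℝ) := h1
      _ ≤ 2^r * ((1/(1/10:ℝ))^r * (1/(1-1/10))^(N-r)) := by
          apply mul_le_mul_of_nonneg_left htb (by positivity)
      _ = 2^r * (10^r * (10/9)^(N-r)) := by norm_num
      _ ≤ 2^r * (10^r * (10/9)^N) := by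
          apply mul_le_mul_of_nonneg_left _ (by positivity)
          apply mul_le_mul_of_nonneg_left _ (by positivity)
          exact pow_le_pow_right₀ (by norm_num) (by omega)
      _ = 20^r * (10/9)^N := by rw [← mul_assoc, ← mul_pow]; norm_num
  have hfinal : (2:ℝ)^N ≤ 20^(m-1+r) * ((20/19)^N * (10/9)^N) := by
    have hc1 : ((2^N : ℕ):ℝ) ≤ ((B * T2 : ℕ):ℝ) := by exact_mod_cast hcount
    push_cast at hc1
    calc (2:ℝ)^N ≤ (B:ℝ) * (T2:ℝ) := hc1
      _ ≤ (20^(m-1) * (20/19)^N) * (20^r * (10/9)^N) := by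
          apply mul_le_mul hBr hT2r (by positivity) (by positivity)
      _ = 20^(m-1+r) * ((20/19)^N * (10/9)^N) := by rw [pow_add]; ring
  -- numeric contradiction
  set s := m - 1 + r with hs
  have hs3 : 20*s ≤ 3*N := by omega
  have hpow20 : ((2:ℝ)^N)^20 ≤ (20^s * ((20/19:ℝ)^N * (10/9)^N))^20 :=
    pow_le_pow_left₀ (by positivity) hfinal 20
  have e1 : ((2:ℝ)^N)^20 = ((2:ℝ)^20)^N := by rw [← pow_mul, ← pow_mul, Nat.mul_comm]
  have e2 : ((20:ℝ)^s)^20 = 20^(20*s) := by rw [← pow_mul, Nat.mul_comm]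
  have e3 : (((20/19:ℝ))^N)^20 = ((20/19:ℝ)^20)^N := by
    rw [← pow_mul, ← pow_mul, Nat.mul_comm]
  have e4 : (((10/9:ℝ))^N)^20 = ((10/9:ℝ)^20)^N := by
    rw [← pow_mul, ← pow_mul, Nat.mul_comm]
  have e5 : (20:ℝ)^(20*s) ≤ 20^(3*N) := pow_le_pow_right₀ (by norm_num) hs3
  have e6 : (20:ℝ)^(3*N) = (8000:ℝ)^N := by rw [pow_mul]; norm_num
  have hchain : ((2:ℝ)^20)^N ≤ (8000 * ((20/19:ℝ)^20 * (10/9)^20))^N := by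
    calc ((2:ℝ)^20)^N = ((2:ℝ)^N)^20 := e1.symm
      _ ≤ (20^s * ((20/19:ℝ)^N * (10/9)^N))^20 := hpow20
      _ = ((20:ℝ)^s)^20 * ((((20/19:ℝ))^N)^20 * (((10/9:ℝ))^N)^20) := by
          rw [mul_pow, mul_pow]
      _ = 20^(20*s) * (((20/19:ℝ)^20)^N * ((10/9:ℝ)^20)^N) := by rw [e2, e3, e4]
      _ ≤ 20^(3*N) * (((20/19:ℝ)^20)^N * ((10/9:ℝ)^20)^N) :=
          mul_le_mul_of_nonneg_right e5 (by positivity)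
      _ = 8000^N * (((20/19:ℝ)^20)^N * ((10/9:ℝ)^20)^N) := by rw [e6]
      _ = (8000 * ((20/19:ℝ)^20 * (10/9)^20))^N := by rw [mul_pow, mul_pow]
  have hbase : (8000 * ((20/19:ℝ)^20 * (10/9)^20)) < 2^20 := by norm_num
  have hlt : (8000 * ((20/19:ℝ)^20 * (10/9)^20))^N < ((2:ℝ)^20)^N :=
    pow_lt_pow_left₀ hbase (by positivity) (by omega)
  linarith
end
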